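/- arXiv:0810.2578 — 10 statements merged into one kernel-verified Lean document; each statement's English description precedes it below -/
import Mathlib

section
/- A small category D is sifted (i.e., colimits of shape D commute with finite products in Set) if and only if D is nonempty and for every pair of objects A, B in D, the category of cospans from A to B (objects of D equipped with morphisms from both A and B) is connected. -/
open CategoryTheory Limits

universe u

namespace SiftedProofAux

variable {D : Type u} [SmallCategory D]

/-- The pointwise product of two `Type`-valued functors. -/
@[simps]
def prodF (X Y : D ⥤ Type u) : D ⥤ Type u where
  obj d := X.obj d × Y.obj d
  map f := TypeCat.ofHom (Prod.map (X.map f) (Y.map f))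
  map_id d := by
    ext p <;> simp [Prod.map, FunctorToTypes.map_id_apply]
  map_comp f g := by
    ext p <;> simp [Prod.map, FunctorToTypes.map_comp_apply]

/-- First projection. -/
@[simps]
def fstNat (X Y : D ⥤ Type u) : prodF X Y ⟶ X where
  app d := TypeCat.ofHom fun p => p.1
  naturality d d' f := rfl

/-- Second projection. -/
@[simps]
def sndNat (X Y : D ⥤ Type u) : prodF X Y ⟶ Y where
  app d := TypeCat.ofHom fun p => p.2
  naturality d d' f := rfl

/-- The pointwise product is a binary product in the functor category. -/
noncomputable def fanIsLimit (X Y : D ⥤ Type u) :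
    IsLimit (BinaryFan.mk (fstNat X Y) (sndNat X Y)) :=
  BinaryFan.isLimitMk
    (fun s =>
      { app := fun d => TypeCat.ofHom fun a => (s.fst.app d a, s.snd.app d a)
        naturality := fun d d' f => by
          ext a
          have h1 := ConcreteCategory.congr_hom (s.fst.naturality f) a
          have h2 := ConcreteCategory.congr_hom (s.snd.naturality f) a
          simp only [types_comp_apply] at h1 h2
          exact Prod.ext h1 h2 })
    (fun s => rfl)
    (fun s => rfl)
    (fun s m h1 h2 => by
      ext d a
      have e1 := ConcreteCategory.congr_hom (NatTrans.congr_app h1 d) a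
      have e2 := ConcreteCategory.congr_hom (NatTrans.congr_app h2 d) a
      simp only [NatTrans.comp_app, types_comp_apply] at e1 e2
      exact Prod.ext e1 e2)

/-- Key connectedness lemma: the class of `(X.map f x, Y.map g y)` in the colimit of the
pointwise product does not depend on the chosen cospan `(f, g)` from `(A, B)`. -/
lemma key (X Y : D ⥤ Type u) {A B : D}
    [IsConnected (StructuredArrow ((A, B) : D × D) (Functor.diag D))]
    (x : X.obj A) (y : Y.obj B)
    (c c' : StructuredArrow ((A, B) : D × D) (Functor.diag D)) :
    colimit.ι (prodF X Y) c.right (X.map c.hom.1 x, Y.map c.hom.2 y) =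
      colimit.ι (prodF X Y) c'.right (X.map c'.hom.1 x, Y.map c'.hom.2 y) :=
  constant_of_preserves_morphisms
    (fun c => colimit.ι (prodF X Y) c.right (X.map c.hom.1 x, Y.map c.hom.2 y))
    (fun c₁ c₂ k => by
      have hw := StructuredArrow.w k
      have h1 : c₂.hom.1 = c₁.hom.1 ≫ k.right := by rw [← hw]; rfl
      have h2 : c₂.hom.2 = c₁.hom.2 ≫ k.right := by rw [← hw]; rfl
      have hmap : (prodF X Y).map k.right (X.map c₁.hom.1 x, Y.map c₁.hom.2 y) =
          (X.map c₂.hom.1 x, Y.map c₂.hom.2 y) := by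
        simp [prodF, Prod.map, h1, h2, FunctorToTypes.map_comp_apply] <;> rfl
      dsimp only
      rw [← hmap]
      exact (colimit.w_apply (prodF X Y) k.right _).symm) c c'

variable (hconn : ∀ A B : D,
  IsConnected (StructuredArrow ((A, B) : D × D) (Functor.diag D)))

/-- The canonical map out of the colimit of the pointwise product. -/
noncomputable def tmap (X Y : D ⥤ Type u) :
    colim.obj (prodF X Y) → colim.obj X × colim.obj Y :=
  fun z => (colim.map (fstNat X Y) z, colim.map (sndNat X Y) z)

lemma tmap_ι (X Y : D ⥤ Type u) (d : D) (p : (prodF X Y).obj d) :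
    tmap X Y (colimit.ι (prodF X Y) d p) = (colimit.ι X d p.1, colimit.ι Y d p.2) := by
  unfold tmap
  rw [Types.Colimit.ι_map_apply, Types.Colimit.ι_map_apply]
  rfl

/-- A partially defined inverse, on representatives. -/
noncomputable def psi (X Y : D ⥤ Type u) (p : Σ d, X.obj d) (q : Σ d, Y.obj d) :
    colim.obj (prodF X Y) :=
  let c := (hconn p.1 q.1).is_nonempty.some
  colimit.ι (prodF X Y) c.right (X.map c.hom.1 p.2, Y.map c.hom.2 q.2)

lemma psi_eq (X Y : D ⥤ Type u) (p : Σ d, X.obj d) (q : Σ d, Y.obj d)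
    (c : StructuredArrow ((p.1, q.1) : D × D) (Functor.diag D)) :
    psi hconn X Y p q = colimit.ι (prodF X Y) c.right (X.map c.hom.1 p.2, Y.map c.hom.2 q.2) := by
  haveI := hconn p.1 q.1
  exact key X Y p.2 q.2 _ c

lemma psi_rel_left (X Y : D ⥤ Type u) {p p' : Σ d, X.obj d} (q : Σ d, Y.obj d)
    (hp : X.ColimitTypeRel p p') : psi hconn X Y p q = psi hconn X Y p' q := by
  obtain ⟨k, hk⟩ := hp
  set c := (hconn p'.1 q.1).is_nonempty.some with hc
  have : psi hconn X Y p q =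
      colimit.ι (prodF X Y) c.right (X.map (k ≫ c.hom.1) p.2, Y.map c.hom.2 q.2) :=
    psi_eq hconn X Y p q
      (StructuredArrow.mk ((k ≫ c.hom.1, c.hom.2) : ((p.1, q.1) : D × D) ⟶ (c.right, c.right)))
  rw [this]
  have : psi hconn X Y p' q =
      colimit.ι (prodF X Y) c.right (X.map c.hom.1 p'.2, Y.map c.hom.2 q.2) := rfl
  rw [this, hk, FunctorToTypes.map_comp_apply]

lemma psi_rel_right (X Y : D ⥤ Type u) (p : Σ d, X.obj d) {q q' : Σ d, Y.obj d}
    (hq : Y.ColimitTypeRel q q') : psi hconn X Y p q = psi hconn X Y p q' := by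
  obtain ⟨k, hk⟩ := hq
  set c := (hconn p.1 q'.1).is_nonempty.some with hc
  have h1 : psi hconn X Y p q =
      colimit.ι (prodF X Y) c.right (X.map c.hom.1 p.2, Y.map (k ≫ c.hom.2) q.2) :=
    psi_eq hconn X Y p q
      (StructuredArrow.mk ((c.hom.1, k ≫ c.hom.2) : ((p.1, q.1) : D × D) ⟶ (c.right, c.right)))
  rw [h1]
  have h2 : psi hconn X Y p q' =
      colimit.ι (prodF X Y) c.right (X.map c.hom.1 p.2, Y.map c.hom.2 q'.2) := rfl
  rw [h2, hk, FunctorToTypes.map_comp_apply]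

/-- The inverse map. -/
noncomputable def phi (X Y : D ⥤ Type u) (u : colim.obj X) (v : colim.obj Y) :
    colim.obj (prodF X Y) :=
  Quot.lift
    (fun p => Quot.lift (fun q => psi hconn X Y p q)
      (fun q q' hq => psi_rel_right hconn X Y p hq))
    (fun p p' hp => by
      funext w
      induction w using Quot.inductionOn with
      | h q => exact psi_rel_left hconn X Y q hp)
    (Types.colimitEquivColimitType X u) (Types.colimitEquivColimitType Y v)

lemma phi_ι (X Y : D ⥤ Type u) (d : D) (p : (prodF X Y).obj d) :
    phi hconn X Y (colimit.ι X d p.1) (colimit.ι Y d p.2) = colimit.ι (prodF X Y) d p := by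
  unfold phi
  rw [Types.colimitEquivColimitType_apply, Types.colimitEquivColimitType_apply]
  show psi hconn X Y ⟨d, p.1⟩ ⟨d, p.2⟩ = _
  rw [psi_eq hconn X Y ⟨d, p.1⟩ ⟨d, p.2⟩
    (StructuredArrow.mk ((𝟙 d, 𝟙 d) : ((d, d) : D × D) ⟶ (d, d)))]
  simp [FunctorToTypes.map_id_apply] <;> rfl

include hconn in
lemma tmap_bijective (X Y : D ⥤ Type u) : Function.Bijective (tmap X Y) := by
  constructor
  · intro z z' h
    obtain ⟨d, p, rfl⟩ := Types.jointly_surjective' z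
    obtain ⟨d', p', rfl⟩ := Types.jointly_surjective' z'
    rw [tmap_ι, tmap_ι] at h
    have h1 : colimit.ι X d p.1 = colimit.ι X d' p'.1 := congrArg Prod.fst h
    have h2 : colimit.ι Y d p.2 = colimit.ι Y d' p'.2 := congrArg Prod.snd h
    calc colimit.ι (prodF X Y) d p
        = phi hconn X Y (colimit.ι X d p.1) (colimit.ι Y d p.2) := (phi_ι hconn X Y d p).symm
      _ = phi hconn X Y (colimit.ι X d' p'.1) (colimit.ι Y d' p'.2) := by rw [h1, h2]
      _ = colimit.ι (prodF X Y) d' p' := phi_ι hconn X Y d' p'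
  · rintro ⟨u, v⟩
    obtain ⟨d, x, rfl⟩ := Types.jointly_surjective' u
    obtain ⟨d', y, rfl⟩ := Types.jointly_surjective' v
    have : Nonempty (StructuredArrow ((d, d') : D × D) (Functor.diag D)) :=
      (hconn d d').is_nonempty
    obtain ⟨c⟩ := this
    refine ⟨colimit.ι (prodF X Y) c.right (X.map c.hom.1 x, Y.map c.hom.2 y), ?_⟩
    refine (tmap_ι X Y c.right _).trans ?_
    show (colimit.ι X c.right (X.map c.hom.1 x), colimit.ι Y c.right (Y.map c.hom.2 y)) = _
    rw [Types.Colimit.w_apply, Types.Colimit.w_apply]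

/-- The mapped binary fan is a limit fan. -/
noncomputable def mappedFanIsLimit (X Y : D ⥤ Type u) :
    IsLimit (BinaryFan.mk (colim.map (fstNat X Y)) (colim.map (sndNat X Y))) := by
  refine BinaryFan.isLimitMk
    (fun s => TypeCat.ofHom fun x => (Equiv.ofBijective (tmap X Y) (tmap_bijective hconn X Y)).symm
      (s.fst x, s.snd x)) (fun s => ?_) (fun s => ?_) (fun s m h1 h2 => ?_)
  · ext x
    have := Equiv.apply_symm_apply
      (Equiv.ofBijective (tmap X Y) (tmap_bijective hconn X Y)) (s.fst x, s.snd x)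
    exact congrArg Prod.fst this
  · ext x
    have := Equiv.apply_symm_apply
      (Equiv.ofBijective (tmap X Y) (tmap_bijective hconn X Y)) (s.fst x, s.snd x)
    exact congrArg Prod.snd this
  · ext x
    apply (tmap_bijective hconn X Y).1
    have e1 := ConcreteCategory.congr_hom h1 x
    have e2 := ConcreteCategory.congr_hom h2 x
    simp only [types_comp_apply] at e1 e2
    exact (Prod.ext e1 e2).trans
      (Equiv.apply_symm_apply (Equiv.ofBijective (tmap X Y) (tmap_bijective hconn X Y))
        (s.fst x, s.snd x)).symm

end SiftedProofAux

open SiftedProofAux in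
/-- A small category `D` is sifted (colimits of shape `D` commute with finite products in `Set`,
i.e. `D` is nonempty and the colimit functor `(D ⥤ Type) ⥤ Type` preserves finite products)
if and only if `D` is nonempty and for all `A B : D` the category of cospans from `A` to `B`
is connected. -/
theorem stmt0 (D : Type u) [SmallCategory D] :
    (Nonempty D ∧ Nonempty (PreservesFiniteProducts (colim : (D ⥤ Type u) ⥤ Type u))) ↔
      (Nonempty D ∧ ∀ A B : D,
        IsConnected (StructuredArrow ((A, B) : D × D) (Functor.diag D))) := by
  constructor
  · rintro ⟨hne, ⟨hprod⟩⟩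
    refine ⟨hne, ?_⟩
    haveI := hprod
    have hfin : (Functor.diag D).Final := by
      apply Functor.final_of_colimit_comp_coyoneda_iso_pUnit
      rintro ⟨A, B⟩
      set CA := coyoneda.obj (Opposite.op A) with hCA
      set CB := coyoneda.obj (Opposite.op B) with hCB
      have iso1 : Functor.diag D ⋙ coyoneda.obj (Opposite.op ((A, B) : D × D)) ≅ prodF CA CB :=
        NatIso.ofComponents (fun d => Iso.refl _) (fun f => rfl)
      haveI : PreservesLimitsOfShape (Discrete WalkingPair)
          (colim : (D ⥤ Type u) ⥤ Type u) := inferInstance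
      have hlim : IsLimit (BinaryFan.mk (colim.map (fstNat CA CB)) (colim.map (sndNat CA CB))) :=
        isLimitMapConeBinaryFanEquiv colim (fstNat CA CB) (sndNat CA CB)
          (isLimitOfPreserves colim (fanIsLimit CA CB))
      have iso2 : colim.obj (prodF CA CB) ≅ (colim.obj CA) × (colim.obj CB) :=
        hlim.conePointUniqueUpToIso (Types.binaryProductLimit (colim.obj CA) (colim.obj CB))
      have isoA : colim.obj CA ≅ PUnit := Coyoneda.colimitCoyonedaIso (Opposite.op A)
      have isoB : colim.obj CB ≅ PUnit := Coyoneda.colimitCoyonedaIso (Opposite.op B)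
      exact HasColimit.isoOfNatIso iso1 ≪≫ iso2 ≪≫
        (Equiv.toIso ((Equiv.prodCongr isoA.toEquiv isoB.toEquiv).trans
          (Equiv.prodPUnit PUnit)))
    intro A B
    exact hfin.out (A, B)
  · rintro ⟨hne, hconn⟩
    refine ⟨hne, ⟨?_⟩⟩
    haveI : Nonempty D := hne
    haveI : (Functor.diag D).Final := ⟨fun d => hconn d.1 d.2⟩
    haveI : IsSifted D := ⟨⟩
    -- colim preserves the terminal object
    have hT : ∀ d : D, Unique ((⊤_ (D ⥤ Type u)).obj d) := fun d =>
      (Types.isTerminalEquivUnique _)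
        (terminalIsTerminal.isTerminalObj ((evaluation D (Type u)).obj d) _)
    haveI : Unique (colim.obj (⊤_ (D ⥤ Type u))) := by
      have const : ∀ d d' : D,
          colimit.ι (⊤_ (D ⥤ Type u)) d (hT d).default =
            colimit.ι (⊤_ (D ⥤ Type u)) d' (hT d').default := by
        apply constant_of_preserves_morphisms
          (fun d => colimit.ι (⊤_ (D ⥤ Type u)) d (hT d).default)
        intro d d' f
        have hx : (⊤_ (D ⥤ Type u)).map f (hT d).default = (hT d').default :=
          (hT d').uniq _
        rw [← hx, Types.Colimit.w_apply]
      refine ⟨⟨colimit.ι (⊤_ (D ⥤ Type u)) hne.some (hT hne.some).default⟩, fun z => ?_⟩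
      obtain ⟨d, s, rfl⟩ := Types.jointly_surjective' z
      rw [(hT d).uniq s]
      exact const d hne.some
    haveI hterm : PreservesLimit (Functor.empty.{0} (D ⥤ Type u))
        (colim : (D ⥤ Type u) ⥤ Type u) :=
      preservesTerminal_of_iso colim
        ((Equiv.equivPUnit.{u + 1, u + 1} (colim.obj (⊤_ (D ⥤ Type u)))).toIso ≪≫
          Types.terminalIso.symm)
    -- colim preserves binary products
    have hpair : ∀ X Y : D ⥤ Type u, PreservesLimit (pair X Y) (colim : (D ⥤ Type u) ⥤ Type u) :=
      fun X Y =>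
        preservesLimit_of_preserves_limit_cone (fanIsLimit X Y)
          ((isLimitMapConeBinaryFanEquiv colim (fstNat X Y) (sndNat X Y)).symm
            (mappedFanIsLimit hconn X Y))
    haveI : PreservesLimitsOfShape (Discrete WalkingPair) (colim : (D ⥤ Type u) ⥤ Type u) :=
      ⟨fun {K} => by
        haveI := hpair (K.obj ⟨WalkingPair.left⟩) (K.obj ⟨WalkingPair.right⟩)
        exact preservesLimit_of_iso_diagram colim (diagramIsoPair K).symm⟩
    haveI : PreservesLimitsOfShape (Discrete PEmpty.{1}) (colim : (D ⥤ Type u) ⥤ Type u) :=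
      preservesLimitsOfShape_pempty_of_preservesTerminal _
    exact PreservesFiniteProducts.of_preserves_binary_and_terminal colim
end

section
/- A functor F : A^op → Set (with A small) is a sifted colimit of representable functors if and only if its left Kan extension along the Yoneda embedding, Lan_Y F : [A^op, Set] → Set, preserves finite products. -/
open CategoryTheory Limits Opposite

universe u

namespace Stmt6Aux

variable {J : Type u} [SmallCategory J]

/-! ### Type-level helpers about limit cones of discrete diagrams -/

section DiscreteHelpers

/-- A cone over a `Discrete WalkingPair` diagram in `Type u` whose pairing map is bijective
is a limit cone. -/
noncomputable def isLimitOfBijective {K : Discrete WalkingPair ⥤ Type u} (c : Cone K)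
    (hb : Function.Bijective fun z =>
      (c.π.app ⟨WalkingPair.left⟩ z, c.π.app ⟨WalkingPair.right⟩ z)) : IsLimit c := by
  let eqv := Equiv.ofBijective _ hb
  refine
    { lift := fun s => ↾fun z => eqv.symm (s.π.app ⟨WalkingPair.left⟩ z, s.π.app ⟨WalkingPair.right⟩ z)
      fac := ?_
      uniq := ?_ }
  · rintro s ⟨⟨⟩⟩ <;> ext z
    · exact congrArg Prod.fst (eqv.apply_symm_apply _)
    · exact congrArg Prod.snd (eqv.apply_symm_apply _)
  · intro s m hm
    ext z
    apply hb.1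
    show eqv (m z) = eqv (eqv.symm _)
    rw [eqv.apply_symm_apply]
    exact Prod.ext (types_congr_hom (hm ⟨WalkingPair.left⟩) z) (types_congr_hom (hm ⟨WalkingPair.right⟩) z)

/-- Conversely, from a limit cone we get bijectivity of the pairing map. -/
theorem bijective_of_isLimit {K : Discrete WalkingPair ⥤ Type u} (c : Cone K)
    (h : IsLimit c) : Function.Bijective fun z =>
      (c.π.app ⟨WalkingPair.left⟩ z, c.π.app ⟨WalkingPair.right⟩ z) := by
  let mkCone : ∀ (a : K.obj ⟨WalkingPair.left⟩) (b : K.obj ⟨WalkingPair.right⟩), Cone K :=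
    fun a b =>
      { pt := PUnit.{u+1}
        π := Discrete.natTrans (fun j =>
          match j with
          | ⟨WalkingPair.left⟩ => ↾fun _ => a
          | ⟨WalkingPair.right⟩ => ↾fun _ => b) }
  constructor
  · intro z z' hz
    have h1 := congrArg Prod.fst hz
    have h2 := congrArg Prod.snd hz
    dsimp at h1 h2
    let s := mkCone (c.π.app ⟨WalkingPair.left⟩ z) (c.π.app ⟨WalkingPair.right⟩ z)
    have hu1 : (↾fun _ : PUnit.{u+1} => z) = h.lift s := by
      apply h.uniq s
      rintro ⟨⟨⟩⟩ <;> rfl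
    have hu2 : (↾fun _ : PUnit.{u+1} => z') = h.lift s := by
      apply h.uniq s
      rintro ⟨⟨⟩⟩ <;> ext w
      · exact h1.symm
      · exact h2.symm
    exact types_congr_hom (hu1.trans hu2.symm) PUnit.unit
  · rintro ⟨a, b⟩
    refine ⟨h.lift (mkCone a b) PUnit.unit, Prod.ext ?_ ?_⟩
    · exact types_congr_hom (h.fac (mkCone a b) ⟨WalkingPair.left⟩) PUnit.unit
    · exact types_congr_hom (h.fac (mkCone a b) ⟨WalkingPair.right⟩) PUnit.unit

/-- A cone over the empty diagram in `Type u` with unique point is a limit cone. -/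
noncomputable def isLimitEmptyOfUnique {K : Discrete PEmpty.{1} ⥤ Type u} (c : Cone K)
    (h1 : Nonempty c.pt) (h2 : Subsingleton c.pt) : IsLimit c where
  lift := fun _ => ↾fun _ => h1.some
  fac := fun _ j => j.as.elim
  uniq := fun _ _ _ => by ext; exact Subsingleton.elim _ _

/-- From a limit cone over the empty diagram in `Type u`, the point is a singleton. -/
theorem unique_of_isLimitEmpty {K : Discrete PEmpty.{1} ⥤ Type u} (c : Cone K)
    (h : IsLimit c) : Nonempty c.pt ∧ Subsingleton c.pt := by
  let s : Cone K := { pt := PUnit.{u+1}, π := Discrete.natTrans (fun j => j.as.elim) }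
  refine ⟨⟨h.lift s PUnit.unit⟩, ⟨fun z z' => ?_⟩⟩
  have hu1 : (↾fun _ : PUnit.{u+1} => z) = h.lift s := h.uniq s _ (fun j => j.as.elim)
  have hu2 : (↾fun _ : PUnit.{u+1} => z') = h.lift s := h.uniq s _ (fun j => j.as.elim)
  exact types_congr_hom (hu1.trans hu2.symm) PUnit.unit

/-- A nonempty subsingleton type is isomorphic to `PUnit`. -/
noncomputable def isoPUnitOfUnique {X : Type u} (h1 : Nonempty X) (h2 : Subsingleton X) :
    X ≅ PUnit.{u + 1} where
  hom := ↾fun _ => PUnit.unit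
  inv := ↾fun _ => h1.some
  hom_inv_id := by ext; exact Subsingleton.elim _ _
  inv_hom_id := rfl

end DiscreteHelpers

/-! ### Pointwise product functors -/

section ProdF

variable {C : Type u} [Category.{u} C]

/-- Pointwise binary product of two `Type`-valued functors. -/
@[simps]
def prodF (X Y : C ⥤ Type u) : C ⥤ Type u where
  obj c := X.obj c × Y.obj c
  map f := ↾fun p => (X.map f p.1, Y.map f p.2)
  map_id c := by ext p <;> simp
  map_comp f g := by ext p <;> simp

/-- First projection. -/
@[simps]
def prodFst (X Y : C ⥤ Type u) : prodF X Y ⟶ X where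
  app c := ↾fun p => p.1

/-- Second projection. -/
@[simps]
def prodSnd (X Y : C ⥤ Type u) : prodF X Y ⟶ Y where
  app c := ↾fun p => p.2

/-- The binary fan on `prodF`. -/
noncomputable def prodFan (X Y : C ⥤ Type u) : BinaryFan X Y :=
  BinaryFan.mk (prodFst X Y) (prodSnd X Y)

/-- The fan on `prodF` is a limit fan. -/
noncomputable def prodFanIsLimit (X Y : C ⥤ Type u) : IsLimit (prodFan X Y) := by
  refine BinaryFan.isLimitMk
    (fun s =>
      { app := fun c => ↾fun z => (s.fst.app c z, s.snd.app c z)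
        naturality := fun c c' f => ?_ })
    (fun s => rfl) (fun s => rfl) ?_
  · ext z
    exact Prod.ext (types_congr_hom (s.fst.naturality f) z) (types_congr_hom (s.snd.naturality f) z)
  · intro s m h1 h2
    ext c z
    exact Prod.ext (types_congr_hom (congrArg (fun t => NatTrans.app t c) h1) z)
      (types_congr_hom (congrArg (fun t => NatTrans.app t c) h2) z)

end ProdF

/-- The "external" product of two diagrams of types. -/
@[simps]
def boxF (X Y : J ⥤ Type u) : J × J ⥤ Type u where
  obj jk := X.obj jk.1 × Y.obj jk.2
  map f := ↾fun p => (X.map f.1 p.1, Y.map f.2 p.2)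
  map_id jk := by ext p <;> simp
  map_comp f g := by ext p <;> simp

/-- The canonical cocone on `boxF X Y` with point `colimit X × colimit Y`. -/
@[simps]
noncomputable def boxCocone (X Y : J ⥤ Type u) : Cocone (boxF X Y) where
  pt := colimit X × colimit Y
  ι :=
    { app := fun jk => ↾fun p => (colimit.ι X jk.1 p.1, colimit.ι Y jk.2 p.2)
      naturality := fun jk jk' f => by
        ext p
        exact Prod.ext (Types.Colimit.w_apply f.1) (Types.Colimit.w_apply f.2) }

theorem boxDesc_bijective (X Y : J ⥤ Type u) :
    Function.Bijective (colimit.desc (boxF X Y) (boxCocone X Y)) := by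
  constructor
  · intro t t' h
    obtain ⟨⟨j, k⟩, ⟨x, y⟩, rfl⟩ := Types.jointly_surjective' t
    obtain ⟨⟨j', k'⟩, ⟨x', y'⟩, rfl⟩ := Types.jointly_surjective' t'
    erw [Types.Colimit.ι_desc_apply, Types.Colimit.ι_desc_apply] at h
    have hX : colimit.ι X j x = colimit.ι X j' x' := congrArg Prod.fst h
    have hY : colimit.ι Y k y = colimit.ι Y k' y' := congrArg Prod.snd h
    have eX := Types.colimit_eq hX
    have eY := Types.colimit_eq hY
    have keyX : ∀ a b : Σ j, X.obj j, Relation.EqvGen (X.ColimitTypeRel) a b →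
        ∀ (k : J) (y : Y.obj k),
          colimit.ι (boxF X Y) (a.1, k) (a.2, y) = colimit.ι (boxF X Y) (b.1, k) (b.2, y) := by
      intro a b hab
      induction hab with
      | rel a b hr =>
        obtain ⟨f, hf⟩ := hr
        intro k y
        have := Types.Colimit.w_apply (F := boxF X Y)
          (f := ((f, 𝟙 k) : (a.1, k) ⟶ (b.1, k))) (x := (a.2, y))
        rw [← this]
        rw [hf]
        simp
        rfl
      | refl a => intro k y; rfl
      | symm a b _ ih => intro k y; exact (ih k y).symm
      | trans a b c _ _ ih1 ih2 => intro k y; exact (ih1 k y).trans (ih2 k y)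
    have keyY : ∀ a b : Σ k, Y.obj k, Relation.EqvGen (Y.ColimitTypeRel) a b →
        ∀ (j : J) (x : X.obj j),
          colimit.ι (boxF X Y) (j, a.1) (x, a.2) = colimit.ι (boxF X Y) (j, b.1) (x, b.2) := by
      intro a b hab
      induction hab with
      | rel a b hr =>
        obtain ⟨f, hf⟩ := hr
        intro j x
        have := Types.Colimit.w_apply (F := boxF X Y)
          (f := ((𝟙 j, f) : (j, a.1) ⟶ (j, b.1))) (x := (x, a.2))
        rw [← this]
        rw [hf]
        simp
        rfl
      | refl a => intro j x; rfl
      | symm a b _ ih => intro j x; exact (ih j x).symm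
      | trans a b c _ _ ih1 ih2 => intro j x; exact (ih1 j x).trans (ih2 j x)
    exact (keyX ⟨j, x⟩ ⟨j', x'⟩ eX k y).trans (keyY ⟨k, y⟩ ⟨k', y'⟩ eY j' x')
  · rintro ⟨tx, ty⟩
    obtain ⟨j, x, rfl⟩ := Types.jointly_surjective' tx
    obtain ⟨k, y, rfl⟩ := Types.jointly_surjective' ty
    exact ⟨colimit.ι (boxF X Y) (j, k) (x, y), by erw [Types.Colimit.ι_desc_apply]; rfl⟩

/-! ### The fiber lemma -/

section Fiber

variable {V W : J ⥤ Type u} (m : V ⟶ W) {X : Type u}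
variable (φ : W ⟶ (Functor.const J).obj X)

/-- If `V` is the fiber of `W` over a point `x : X` along a cocone `φ` on `W` inducing a
bijection `colimit W ≃ X`, then `colimit V` is a singleton. -/
theorem fiber_colimit_unique (hm : ∀ j, Function.Injective (m.app j))
    (hφ : Function.Bijective (colimit.desc W ⟨X, φ⟩))
    (x : X) (hx : ∀ j (w : W.obj j), φ.app j w = x ↔ ∃ v, m.app j v = w) :
    Nonempty (colimit V) ∧ Subsingleton (colimit V) := by
  have descι : ∀ (j) (w : W.obj j), colimit.desc W ⟨X, φ⟩ (colimit.ι W j w) = φ.app j w :=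
    fun j w => by simp
  have φnat : ∀ {j j'} (f : j ⟶ j') (w : W.obj j), φ.app j' (W.map f w) = φ.app j w := by
    intro j j' f w
    have := types_congr_hom (φ.naturality f) w
    simpa using this
  constructor
  · obtain ⟨t, ht⟩ := hφ.2 x
    obtain ⟨j, w, rfl⟩ := Types.jointly_surjective' t
    rw [descι] at ht
    obtain ⟨v, -⟩ := (hx j w).mp ht
    exact ⟨colimit.ι V j v⟩
  · constructor
    intro t₁ t₂
    obtain ⟨j₁, v₁, rfl⟩ := Types.jointly_surjective' t₁
    obtain ⟨j₂, v₂, rfl⟩ := Types.jointly_surjective' t₂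
    -- the images in `colimit W` agree
    have fib : ∀ (j) (v : V.obj j), φ.app j (m.app j v) = x :=
      fun j v => (hx j (m.app j v)).mpr ⟨v, rfl⟩
    have him : colimit.ι W j₁ (m.app j₁ v₁) = colimit.ι W j₂ (m.app j₂ v₂) := by
      apply hφ.1
      rw [descι, descι, fib, fib]
    have e := Types.colimit_eq him
    -- lift the zigzag
    have key : ∀ a b : Σ j, W.obj j, Relation.EqvGen (W.ColimitTypeRel) a b →
        (φ.app a.1 a.2 = x ↔ φ.app b.1 b.2 = x) ∧
          ∀ (va : V.obj a.1) (vb : V.obj b.1), m.app a.1 va = a.2 → m.app b.1 vb = b.2 →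
            colimit.ι V a.1 va = colimit.ι V b.1 vb := by
      intro a b hab
      induction hab with
      | rel a b hr =>
        obtain ⟨f, hf⟩ := hr
        constructor
        · rw [hf, φnat]
        · intro va vb hva hvb
          have : m.app b.1 (V.map f va) = m.app b.1 vb := by
            rw [hvb, hf, ← hva]
            exact types_congr_hom (m.naturality f) va
          rw [← hm b.1 this]
          exact (Types.Colimit.w_apply (F := V) f).symm
      | refl a =>
        exact ⟨Iff.rfl, fun va vb hva hvb => by rw [hm a.1 (hva.trans hvb.symm)]⟩
      | symm a b _ ih =>
        exact ⟨ih.1.symm, fun va vb hva hvb => (ih.2 vb va hvb hva).symm⟩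
      | trans a b c hab _ ih1 ih2 =>
        refine ⟨ih1.1.trans ih2.1, fun va vc hva hvc => ?_⟩
        -- need a lift at b
        have hb : φ.app b.1 b.2 = x := by
          rw [← ih1.1]
          rw [← hva, fib]
        obtain ⟨vb, hvb⟩ := (hx b.1 b.2).mp hb
        exact (ih1.2 va vb hva hvb).trans (ih2.2 vb vc hvb hvc)
    exact (key ⟨j₁, m.app j₁ v₁⟩ ⟨j₂, m.app j₂ v₂⟩ e).2 v₁ v₂ rfl rfl

end Fiber

/-! ### `colim` on a sifted category preserves finite products -/

section ColimSifted

variable (X Y : J ⥤ Type u)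

theorem colim_pair_bijective [IsSifted J] :
    Function.Bijective (fun z : colimit (prodF X Y) =>
      (colimMap (prodFst X Y) z, colimMap (prodSnd X Y) z)) := by
  let e : prodF X Y ≅ Functor.diag J ⋙ boxF X Y :=
    NatIso.ofComponents (fun j => Iso.refl _) (by intros; rfl)
  let δ := HasColimit.isoOfNatIso e
  let pre := colimit.pre (boxF X Y) (Functor.diag J)
  let β := colimit.desc (boxF X Y) (boxCocone X Y)
  have claim : (fun z : colimit (prodF X Y) =>
      (colimMap (prodFst X Y) z, colimMap (prodSnd X Y) z)) = β ∘ pre ∘ δ.hom := by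
    funext z
    obtain ⟨j, ⟨x, y⟩, rfl⟩ := Types.jointly_surjective' z
    have l1 : colimMap (prodFst X Y) (colimit.ι (prodF X Y) j (x, y)) = colimit.ι X j x := by
      exact types_congr_hom (ι_colimMap (prodFst X Y) j) (x, y)
    have l2 : colimMap (prodSnd X Y) (colimit.ι (prodF X Y) j (x, y)) = colimit.ι Y j y := by
      exact types_congr_hom (ι_colimMap (prodSnd X Y) j) (x, y)
    have r1 : δ.hom (colimit.ι (prodF X Y) j (x, y)) =
        colimit.ι (Functor.diag J ⋙ boxF X Y) j (x, y) := by
      have := types_congr_hom (HasColimit.isoOfNatIso_ι_hom e j) (x, y)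
      exact this
    have r2 : pre (colimit.ι (Functor.diag J ⋙ boxF X Y) j (x, y)) =
        colimit.ι (boxF X Y) (j, j) (x, y) := types_congr_hom (colimit.ι_pre (boxF X Y) (Functor.diag J) j) (x, y)
    have r3 : β (colimit.ι (boxF X Y) (j, j) (x, y)) = (colimit.ι X j x, colimit.ι Y j y) := by
      simp only [β]
      erw [Types.Colimit.ι_desc_apply]
      rfl
    simp only [l1, l2, Function.comp_apply, r1, r2, r3]
  rw [claim]
  have hβ : Function.Bijective β := boxDesc_bijective X Y
  have hpre : Function.Bijective pre := by
    rw [← isIso_iff_bijective]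
    infer_instance
  exact hβ.comp (hpre.comp δ.toEquiv.bijective)

noncomputable def preservesPairColim [IsSifted J] :
    PreservesLimit (pair X Y) (colim (J := J) (C := Type u)) :=
  preservesLimit_of_preserves_limit_cone (prodFanIsLimit X Y)
    (isLimitOfBijective _ (colim_pair_bijective X Y))

/-- The cone over an arbitrary empty diagram in `J ⥤ Type u` with constant-`PUnit` point. -/
def emptyConeFunctor (K : Discrete PEmpty.{1} ⥤ J ⥤ Type u) : Cone K where
  pt := (Functor.const J).obj PUnit.{u + 1}
  π := Discrete.natTrans (fun j => j.as.elim)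

def emptyConeFunctorIsLimit (K : Discrete PEmpty.{1} ⥤ J ⥤ Type u) :
    IsLimit (emptyConeFunctor K) where
  lift s := { app := fun j => ↾fun _ => PUnit.unit, naturality := by intros; rfl }
  fac s j := j.as.elim
  uniq s m _ := by
    ext j z
    exact Subsingleton.elim (α := PUnit.{u+1}) _ _

theorem colim_sifted_preservesFiniteProducts [IsSifted J] :
    PreservesFiniteProducts (colim : (J ⥤ Type u) ⥤ Type u) := by
  have hpair : PreservesLimitsOfShape (Discrete WalkingPair)
      (colim : (J ⥤ Type u) ⥤ Type u) := by
    constructor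
    intro K
    haveI := preservesPairColim (K.obj ⟨WalkingPair.left⟩) (K.obj ⟨WalkingPair.right⟩)
    exact preservesLimit_of_iso_diagram colim (diagramIsoPair K).symm
  have hempty : PreservesLimitsOfShape (Discrete PEmpty.{1})
      (colim : (J ⥤ Type u) ⥤ Type u) := by
    constructor
    intro K
    apply preservesLimit_of_preserves_limit_cone (emptyConeFunctorIsLimit K)
    apply isLimitEmptyOfUnique
    · exact ⟨(Types.colimitConstPUnitIsoPUnit.{u} J).inv PUnit.unit⟩
    · exact ⟨fun a b => (Types.colimitConstPUnitIsoPUnit.{u} J).toEquiv.injective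
        (Subsingleton.elim _ _)⟩
  exact PreservesFiniteProducts.of_preserves_binary_and_terminal colim

end ColimSifted

/-! ### Density: the canonical cocone on `G ⋙ yoneda ⋙ ev_c` -/

section Density

variable {A : Type u} [SmallCategory A] {F : Aᵒᵖ ⥤ Type u}
variable {D : Type u} [SmallCategory D] (G : D ⥤ A) (e : colimit (G ⋙ yoneda) ≅ F)

/-- The canonical element of `F (G d)` induced by the colimit presentation. -/
noncomputable def xd (d : D) : F.obj (op (G.obj d)) :=
  yonedaEquiv (colimit.ι (G ⋙ yoneda) d ≫ e.hom)

theorem xd_nat {d d' : D} (h : d ⟶ d') : F.map (G.map h).op (xd G e d') = xd G e d := by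
  unfold xd
  rw [yonedaEquiv_naturality]
  congr 1
  rw [← Category.assoc]
  congr 1
  exact colimit.w (G ⋙ yoneda) h

/-- The evaluation diagram `d ↦ (c.unop ⟶ G d)`. -/
def Wc (c : Aᵒᵖ) : D ⥤ Type u :=
  (G ⋙ yoneda) ⋙ (evaluation Aᵒᵖ (Type u)).obj c

/-- The canonical cocone on `Wc G c` with point `F.obj c`. -/
noncomputable def densCocone (c : Aᵒᵖ) : Cocone (Wc G c) where
  pt := F.obj c
  ι :=
    { app := fun d => ↾fun f => F.map f.op (xd G e d)
      naturality := fun d d' h => by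
        ext (f : c.unop ⟶ G.obj d)
        show F.map (f ≫ G.map h).op (xd G e d') = F.map f.op (xd G e d)
        rw [op_comp, FunctorToTypes.map_comp_apply, xd_nat] }

theorem densCocone_bijective (c : Aᵒᵖ) :
    Function.Bijective (colimit.desc (Wc G c) (densCocone G e c)) := by
  have heq : colimit.desc (Wc G c) (densCocone G e c) =
      (colimitObjIsoColimitCompEvaluation (G ⋙ yoneda) c).inv ≫ e.hom.app c := by
    apply colimit.hom_ext
    intro d
    erw [colimit.ι_desc, ← Category.assoc]
    erw [colimitObjIsoColimitCompEvaluation_ι_inv (G ⋙ yoneda) d c]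
    ext (f : c.unop ⟶ G.obj d)
    show F.map f.op (xd G e d) =
      e.hom.app c ((colimit.ι (G ⋙ yoneda) d).app c f)
    rw [xd, yonedaEquiv_naturality, yonedaEquiv_apply]
    show (yoneda.map f ≫ colimit.ι (G ⋙ yoneda) d ≫ e.hom).app (op c.unop) (𝟙 c.unop) = _
    simp
  rw [heq]
  exact ((colimitObjIsoColimitCompEvaluation (G ⋙ yoneda) c).symm ≪≫ e.app c).toEquiv.bijective

/-- The canonical comparison functor `D ⥤ F.Elementsᵒᵖ`. -/
noncomputable def psi : D ⥤ F.Elementsᵒᵖ where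
  obj d := op (F.elementsMk (op (G.obj d)) (xd G e d))
  map {d d'} h :=
    Quiver.Hom.op (X := F.elementsMk (op (G.obj d')) (xd G e d'))
      (Y := F.elementsMk (op (G.obj d)) (xd G e d))
      ⟨(G.map h).op, xd_nat G e h⟩
  map_id d := by
    apply Quiver.Hom.unop_inj
    apply Subtype.ext
    simp
  map_comp {d d' d''} h h' := by
    apply Quiver.Hom.unop_inj
    apply Subtype.ext
    simp

theorem psi_coyoneda_unique (e₀ : F.Elementsᵒᵖ) :
    Nonempty (colimit (psi G e ⋙ coyoneda.obj (op e₀))) ∧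
      Subsingleton (colimit (psi G e ⋙ coyoneda.obj (op e₀))) := by
  let V := psi G e ⋙ coyoneda.obj (op e₀)
  let m : V ⟶ Wc G e₀.unop.1 :=
    { app := fun d => ↾fun u => (u.unop.val).unop
      naturality := fun d d' h => by
        ext u
        rfl }
  have hm : ∀ d, Function.Injective (m.app d) := by
    intro d u₁ u₂ hh
    have h1 : u₁.unop.val = u₂.unop.val := Quiver.Hom.unop_inj hh
    have h2 : u₁.unop = u₂.unop := Subtype.ext h1
    exact Quiver.Hom.unop_inj h2
  have hx : ∀ d (w : (Wc G e₀.unop.1).obj d),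
      (densCocone G e e₀.unop.1).ι.app d w = e₀.unop.2 ↔ ∃ v, m.app d v = w := by
    intro d w
    constructor
    · intro hw
      refine ⟨Quiver.Hom.op (Y := e₀.unop)
        (X := F.elementsMk (op (G.obj d)) (xd G e d)) ⟨w.op, hw⟩, rfl⟩
    · rintro ⟨v, rfl⟩
      exact v.unop.2
  obtain ⟨h1, h2⟩ := fiber_colimit_unique m (densCocone G e e₀.unop.1).ι hm
    (densCocone_bijective G e e₀.unop.1) e₀.unop.2 hx
  exact ⟨h1, h2⟩

theorem psi_final : (psi G e).Final := by
  apply Functor.final_of_colimit_comp_coyoneda_iso_pUnit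
  intro e₀
  obtain ⟨h1, h2⟩ := psi_coyoneda_unique G e e₀
  exact isoPUnitOfUnique h1 h2

include G e in
theorem elements_isSifted_of_presentation [IsSifted D] : IsSifted F.Elementsᵒᵖ := by
  haveI hpsi : (psi G e).Final := psi_final G e
  haveI hne : Nonempty F.Elementsᵒᵖ := ⟨(psi G e).obj (Classical.arbitrary D)⟩
  haveI hprod : ((psi G e).prod (psi G e)).Final := by
    apply Functor.final_of_colimit_comp_coyoneda_iso_pUnit
    rintro ⟨e₁, e₂⟩
    let V₁ := psi G e ⋙ coyoneda.obj (op e₁)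
    let V₂ := psi G e ⋙ coyoneda.obj (op e₂)
    let i : (psi G e).prod (psi G e) ⋙ coyoneda.obj (op (e₁, e₂)) ≅ boxF V₁ V₂ :=
      NatIso.ofComponents (fun _ => Iso.refl _) (by intros; rfl)
    refine HasColimit.isoOfNatIso i ≪≫
      (Equiv.ofBijective _ (boxDesc_bijective V₁ V₂)).toIso ≪≫ ?_
    obtain ⟨n1, s1⟩ := psi_coyoneda_unique G e e₁
    obtain ⟨n2, s2⟩ := psi_coyoneda_unique G e e₂
    exact isoPUnitOfUnique (X := colimit V₁ × colimit V₂) ⟨(n1.some, n2.some)⟩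
      (by haveI := s1; haveI := s2; infer_instance)
  haveI : (Functor.diag F.Elementsᵒᵖ).Final := by
    haveI h2 : ((psi G e) ⋙ Functor.diag F.Elementsᵒᵖ).Final := by
      apply Functor.final_of_natIso
        (F := Functor.diag D ⋙ (psi G e).prod (psi G e))
      exact NatIso.ofComponents (fun d => Iso.refl _) (by intros; aesop_cat)
    exact Functor.final_of_final_comp (psi G e) (Functor.diag _)
  constructor

end Density

/-! ### Backward direction: preservation of finite products implies sifted elements -/

section Backward

variable {A : Type u} [SmallCategory A] (F : Aᵒᵖ ⥤ Type u)

/-- The canonical presentation of a presheaf as a colimit of representables. -/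
noncomputable def ecan :
    colimit ((CategoryOfElements.π F).leftOp ⋙ yoneda) ≅ F :=
  HasColimit.isoOfNatIso (Functor.isoWhiskerLeft (CategoryOfElements.π F).leftOp
    uliftYonedaIsoYoneda.{0}.symm) ≪≫
  colimit.isoColimitCocone ⟨_, Presheaf.colimitOfRepresentable.{0} F⟩

theorem xd_canonical (e'' : F.Elementsᵒᵖ) :
    xd (CategoryOfElements.π F).leftOp (ecan F) e'' = e''.unop.2 := by
  unfold xd ecan
  rw [yonedaEquiv_apply]
  erw [Iso.trans_hom, HasColimit.isoOfNatIso_ι_hom_assoc, colimit.isoColimitCocone_ι_hom]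
  simp [uliftYonedaEquiv]
  exact FunctorToTypes.map_id_apply F _

theorem elements_isSifted_of_preserves
    (hT : PreservesFiniteProducts
      ((Functor.whiskeringLeft F.Elementsᵒᵖ A (Type u)).obj (CategoryOfElements.π F).leftOp ⋙ colim)) :
    IsSifted F.Elementsᵒᵖ := by
  haveI := hT
  set p := (CategoryOfElements.π F).leftOp with hpdef
  set T := (Functor.whiskeringLeft F.Elementsᵒᵖ A (Type u)).obj p ⋙ colim with hTdef
  -- connectedness via preservation of the terminal object
  have hterm := unique_of_isLimitEmpty _
    (isLimitOfPreserves T (emptyConeFunctorIsLimit (J := A) (Functor.empty.{0} _)))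
  have i1 : p ⋙ (Functor.const A).obj PUnit.{u + 1} ≅
      Types.constPUnitFunctor.{u} F.Elementsᵒᵖ :=
    NatIso.ofComponents (fun _ => Iso.refl _) (by intros; rfl)
  have ii : colimit (Types.constPUnitFunctor.{u} F.Elementsᵒᵖ) ≅ PUnit :=
    (HasColimit.isoOfNatIso i1.symm) ≪≫ isoPUnitOfUnique hterm.1 hterm.2
  haveI hconn : IsConnected F.Elementsᵒᵖ :=
    (Types.isConnected_iff_colimit_constPUnitFunctor_iso_pUnit.{u} _).mpr ⟨ii⟩
  -- binary products
  haveI hdiag : (Functor.diag F.Elementsᵒᵖ).Final := by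
    apply Functor.final_of_colimit_comp_coyoneda_iso_pUnit
    rintro ⟨e₁, e₂⟩
    let QA : A ⥤ Type u := yoneda ⋙ (evaluation Aᵒᵖ (Type u)).obj e₁.unop.1
    let QB : A ⥤ Type u := yoneda ⋙ (evaluation Aᵒᵖ (Type u)).obj e₂.unop.1
    let W : F.Elementsᵒᵖ ⥤ Type u := p ⋙ prodF QA QB
    let κ₁ := colimit.desc (Wc p e₁.unop.1) (densCocone p (ecan F) e₁.unop.1)
    let κ₂ := colimit.desc (Wc p e₂.unop.1) (densCocone p (ecan F) e₂.unop.1)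
    let φ : W ⟶ (Functor.const F.Elementsᵒᵖ).obj (F.obj e₁.unop.1 × F.obj e₂.unop.1) :=
      { app := fun e'' => ↾fun w => ((densCocone p (ecan F) e₁.unop.1).ι.app e'' w.1,
          (densCocone p (ecan F) e₂.unop.1).ι.app e'' w.2)
        naturality := fun e'' e''' h => by
          ext w
          refine Prod.ext ?_ ?_
          · exact types_congr_hom ((densCocone p (ecan F) e₁.unop.1).ι.naturality h) w.1
          · exact types_congr_hom ((densCocone p (ecan F) e₂.unop.1).ι.naturality h) w.2 }
    have hlim := bijective_of_isLimit _ (isLimitOfPreserves T (prodFanIsLimit QA QB))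
    have claim : ⇑(colimit.desc W ⟨F.obj e₁.unop.1 × F.obj e₂.unop.1, φ⟩) =
        (Prod.map κ₁ κ₂) ∘ (fun z =>
          ((T.mapCone (prodFan QA QB)).π.app ⟨WalkingPair.left⟩ z,
           (T.mapCone (prodFan QA QB)).π.app ⟨WalkingPair.right⟩ z)) := by
      funext z
      obtain ⟨e'', w, rfl⟩ := Types.jointly_surjective' (F := W) z
      have lhs : colimit.desc W ⟨F.obj e₁.unop.1 × F.obj e₂.unop.1, φ⟩
          (colimit.ι W e'' w) = φ.app e'' w := by exact Types.Colimit.ι_desc_apply _ _ _ _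
      have r1 : (T.mapCone (prodFan QA QB)).π.app ⟨WalkingPair.left⟩ (colimit.ι W e'' w) =
          colimit.ι (Wc p e₁.unop.1) e'' w.1 :=
        types_congr_hom (ι_colimMap (Functor.whiskerLeft p (prodFst QA QB)) e'') w
      have r2 : (T.mapCone (prodFan QA QB)).π.app ⟨WalkingPair.right⟩ (colimit.ι W e'' w) =
          colimit.ι (Wc p e₂.unop.1) e'' w.2 :=
        types_congr_hom (ι_colimMap (Functor.whiskerLeft p (prodSnd QA QB)) e'') w
      have k1 : κ₁ (colimit.ι (Wc p e₁.unop.1) e'' w.1) =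
          (densCocone p (ecan F) e₁.unop.1).ι.app e'' w.1 := by exact Types.Colimit.ι_desc_apply _ _ _ _
      have k2 : κ₂ (colimit.ι (Wc p e₂.unop.1) e'' w.2) =
          (densCocone p (ecan F) e₂.unop.1).ι.app e'' w.2 := by exact Types.Colimit.ι_desc_apply _ _ _ _
      rw [lhs]
      show _ = (Prod.map κ₁ κ₂) (_, _)
      rw [r1, r2]
      show _ = (κ₁ _, κ₂ _)
      rw [k1, k2]
      rfl
    have hφ : Function.Bijective
        (colimit.desc W ⟨F.obj e₁.unop.1 × F.obj e₂.unop.1, φ⟩) := by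
      rw [claim]
      exact (Function.Bijective.prodMap (densCocone_bijective p (ecan F) e₁.unop.1)
        (densCocone_bijective p (ecan F) e₂.unop.1)).comp hlim
    -- the fiber functor
    let m : Functor.diag F.Elementsᵒᵖ ⋙ coyoneda.obj (op (e₁, e₂)) ⟶ W :=
      { app := fun e'' => ↾fun u => ((u.1.unop.val).unop, (u.2.unop.val).unop)
        naturality := fun e'' e''' h => by
          ext u
          rfl }
    have hm : ∀ e'', Function.Injective (m.app e'') := by
      intro e'' u₁ u₂ hh
      have l1 : u₁.1 = u₂.1 := Quiver.Hom.unop_inj (Subtype.ext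
        (Quiver.Hom.unop_inj (congrArg Prod.fst hh)))
      have l2 : u₁.2 = u₂.2 := Quiver.Hom.unop_inj (Subtype.ext
        (Quiver.Hom.unop_inj (congrArg Prod.snd hh)))
      exact Prod.ext l1 l2
    have hx : ∀ e'' (w : W.obj e''),
        φ.app e'' w = (e₁.unop.2, e₂.unop.2) ↔ ∃ v, m.app e'' v = w := by
      intro e'' w
      constructor
      · intro hw
        have h1 : F.map w.1.op (xd p (ecan F) e'') = e₁.unop.2 := congrArg Prod.fst hw
        have h2 : F.map w.2.op (xd p (ecan F) e'') = e₂.unop.2 := congrArg Prod.snd hw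
        rw [xd_canonical] at h1 h2
        exact ⟨(Quiver.Hom.op (X := e''.unop) (Y := e₁.unop) ⟨w.1.op, h1⟩,
                Quiver.Hom.op (X := e''.unop) (Y := e₂.unop) ⟨w.2.op, h2⟩), rfl⟩
      · rintro ⟨v, rfl⟩
        refine Prod.ext ?_ ?_
        · show F.map ((v.1.unop.val).unop).op (xd p (ecan F) e'') = e₁.unop.2
          rw [xd_canonical]
          exact v.1.unop.2
        · show F.map ((v.2.unop.val).unop).op (xd p (ecan F) e'') = e₂.unop.2
          rw [xd_canonical]
          exact v.2.unop.2
    obtain ⟨h1, h2⟩ := fiber_colimit_unique m φ hm hφ (e₁.unop.2, e₂.unop.2) hx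
    exact isoPUnitOfUnique h1 h2
  constructor

end Backward

end Stmt6Aux

open Stmt6Aux in
/-- A presheaf `F : Aᵒᵖ ⥤ Type` on a small category `A` is a sifted colimit of representables
if and only if the left Kan extension of `F` along the Yoneda embedding -- equivalently the
functor computing `F`-weighted colimits, `G ↦ F ⊗ G`, here realized as the colimit over the
(opposite of the) category of elements of `F` -- preserves finite products. -/
theorem stmt6 {A : Type u} [SmallCategory A] (F : Aᵒᵖ ⥤ Type u) :
    (∃ D : Cat.{u, u}, IsSifted D ∧ ∃ G : D ⥤ A,
        Nonempty (colimit (G ⋙ yoneda) ≅ F)) ↔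
      Nonempty (PreservesFiniteProducts
        ((Functor.whiskeringLeft F.Elementsᵒᵖ A (Type u)).obj (CategoryOfElements.π F).leftOp ⋙
          colim)) := by
  constructor
  · rintro ⟨D, hD, G, ⟨e⟩⟩
    haveI : IsSifted D := hD
    haveI : IsSifted F.Elementsᵒᵖ := elements_isSifted_of_presentation G e
    haveI := colim_sifted_preservesFiniteProducts (J := F.Elementsᵒᵖ)
    exact ⟨⟨fun n => inferInstance⟩⟩
  · rintro ⟨hT⟩
    haveI : IsSifted F.Elementsᵒᵖ := elements_isSifted_of_preserves F hT
    exact ⟨Cat.of F.Elementsᵒᵖ, (by assumption : IsSifted F.Elementsᵒᵖ),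
      (CategoryOfElements.π F).leftOp, ⟨ecan F⟩⟩
end

section
/- If A is a small category with finite coproducts, then every functor F : A^op → Set that preserves finite products (sends finite coproducts in A to finite products in Set) is a sifted colimit of representable functors; concretely, the category of elements of F has finite coproducts and hence is sifted, and F is the colimit of representables indexed by it. -/
open CategoryTheory Limits

universe u

theorem stmt7_aux {A : Type u} [SmallCategory A] [HasFiniteCoproducts A]
    (F : Aᵒᵖ ⥤ Type u) [PreservesFiniteProducts F] :
    HasFiniteCoproducts (F.Elementsᵒᵖ) := by
  have : ∀ (n : ℕ), HasLimitsOfShape (Discrete (Fin n)) F.Elements := by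
    intro n
    haveI : HasLimitsOfShape (Discrete (Fin n)) Aᵒᵖ := inferInstance
    haveI : PreservesLimitsOfShape (Discrete (Fin n)) F :=
      (PreservesFiniteProducts.preserves n)
    infer_instance
  constructor
  intro n
  haveI : HasLimitsOfShape (Discrete (Fin n))ᵒᵖ F.Elements :=
    hasLimitsOfShape_of_equivalence (Discrete.opposite (Fin n)).symm
  exact hasColimitsOfShape_op_of_hasLimitsOfShape

/-- If `A` is a small category with finite coproducts, every finite-product-preserving
presheaf `F : Aᵒᵖ ⥤ Type` is a sifted colimit of representables: the (opposite of the)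
category of elements of `F` has finite coproducts, hence is sifted, and `F` is the colimit
of representables indexed by it. -/
theorem stmt7 {A : Type u} [SmallCategory A] [HasFiniteCoproducts A]
    (F : Aᵒᵖ ⥤ Type u) [PreservesFiniteProducts F] :
    HasFiniteCoproducts (F.Elementsᵒᵖ) ∧ IsSifted (F.Elementsᵒᵖ) ∧
      Nonempty (colimit ((CategoryOfElements.π F).leftOp ⋙ yoneda) ≅ F) := by
  haveI h1 : HasFiniteCoproducts (F.Elementsᵒᵖ) := stmt7_aux F
  haveI : PreservesLimitsOfShape (Discrete PEmpty.{1}) F :=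
    inferInstance
  haveI : HasTerminal F.Elements := inferInstance
  haveI : Nonempty (F.Elementsᵒᵖ) := ⟨Opposite.op (⊤_ F.Elements)⟩
  haveI h2 : IsSifted (F.Elementsᵒᵖ) := inferInstance
  exact ⟨h1, h2, ⟨HasColimit.isoOfNatIso (Functor.isoWhiskerLeft _ uliftYonedaIsoYoneda.{0}).symm ≪≫
    colimit.isoColimitCocone ⟨_, Presheaf.colimitOfRepresentable.{0} F⟩⟩⟩
end

section
/- Let F : A^op → Set be a weight, J : A → B and S : B → C functors, with A, B small. Then the F-weighted colimit of S∘J is isomorphic to the (Lan_J F)-weighted colimit of S, either side existing if the other does: F ⋆ (S∘J) ≅ (Lan_J F) ⋆ S. -/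
open CategoryTheory Limits

universe v w u

namespace Stmt9Aux

variable {A B : Type u} [SmallCategory A] [SmallCategory B]
variable (F : Aᵒᵖ ⥤ Type u) (J : A ⥤ B)

/-- The canonical functor from the elements of `F` to the elements of `Lan_J F`. -/
@[simps]
noncomputable def Φ : F.Elements ⥤ (J.op.leftKanExtension F).Elements where
  obj p := ⟨J.op.obj p.1, (J.op.leftKanExtensionUnit F).app p.1 p.2⟩
  map {p q} f := ⟨J.op.map f.val, by
    have h := ConcreteCategory.congr_hom ((J.op.leftKanExtensionUnit F).naturality f.val) p.2
    dsimp at h ⊢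
    rw [← h, f.2]⟩

variable {F J} in
/-- Objects of the costructured arrow category from sigma data. -/
noncomputable def mkObj (e : (J.op.leftKanExtension F).Elements)
    (p : Σ g : CostructuredArrow J.op e.1, F.obj g.left)
    (hp : (J.op.leftKanExtension F).map p.1.hom
      ((J.op.leftKanExtensionUnit F).app p.1.left p.2) = e.2) :
    CostructuredArrow (Φ F J) e :=
  CostructuredArrow.mk (S := Φ F J) (T := e)
    (Y := F.elementsMk p.1.left p.2) (⟨p.1.hom, hp⟩)

variable {F J}

lemma eqv_ι {e : (J.op.leftKanExtension F).Elements}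
    {c : Cocone (CostructuredArrow.proj J.op e.1 ⋙ F)}
    {p q : Σ g : CostructuredArrow J.op e.1, F.obj g.left}
    (h : Relation.EqvGen ((CostructuredArrow.proj J.op e.1 ⋙ F).ColimitTypeRel) p q) :
    c.ι.app p.1 p.2 = c.ι.app q.1 q.2 := by
  induction h with
  | rel p q hr =>
    obtain ⟨f, hf⟩ := hr
    have := ConcreteCategory.congr_hom (c.ι.naturality f) p.2
    dsimp at this
    rw [hf]; exact this.symm
  | refl => rfl
  | symm _ _ _ ih => exact ih.symm
  | trans _ _ _ _ _ ih₁ ih₂ => exact ih₁.trans ih₂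

lemma zig (e : (J.op.leftKanExtension F).Elements)
    (p q : Σ g : CostructuredArrow J.op e.1, F.obj g.left)
    (h : Relation.EqvGen ((CostructuredArrow.proj J.op e.1 ⋙ F).ColimitTypeRel) p q)
    (hp : (J.op.leftKanExtension F).map p.1.hom
      ((J.op.leftKanExtensionUnit F).app p.1.left p.2) = e.2)
    (hq : (J.op.leftKanExtension F).map q.1.hom
      ((J.op.leftKanExtensionUnit F).app q.1.left q.2) = e.2) :
    Zigzag (mkObj e p hp) (mkObj e q hq) := by
  induction h with
  | rel p q hr =>
    obtain ⟨f, hf⟩ := hr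
    refine Relation.ReflTransGen.single (Or.inl ⟨?_⟩)
    refine CostructuredArrow.homMk
      (⟨f.left, hf.symm⟩ : F.elementsMk p.1.left p.2 ⟶ F.elementsMk q.1.left q.2) ?_
    apply CategoryOfElements.ext
    exact CostructuredArrow.w f
  | refl => exact Relation.ReflTransGen.refl
  | symm x y h ih => exact zigzag_symmetric.symm _ _ (ih hq hp)
  | trans x y z h₁ h₂ ih₁ ih₂ =>
    have hy : (J.op.leftKanExtension F).map y.1.hom
        ((J.op.leftKanExtensionUnit F).app y.1.left y.2) = e.2 :=
      (eqv_ι (c := (Functor.LeftExtension.mk _ (J.op.leftKanExtensionUnit F)).coconeAt e.1)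
        h₁).symm.trans hp
    exact Relation.ReflTransGen.trans (ih₁ hp hy) (ih₂ hy hq)


instance : (Φ F J).Initial := by
  constructor
  intro e
  have hc : IsColimit ((Functor.LeftExtension.mk _
      (J.op.leftKanExtensionUnit F)).coconeAt e.1) :=
    (Functor.isPointwiseLeftKanExtensionOfIsLeftKanExtension
      (J.op.leftKanExtension F) (J.op.leftKanExtensionUnit F)) e.1
  obtain ⟨g, x, hx⟩ := Types.jointly_surjective_of_isColimit hc e.2
  have hne : Nonempty (CostructuredArrow (Φ F J) e) := ⟨mkObj e ⟨g, x⟩ hx⟩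
  refine zigzag_isConnected fun o₁ o₂ => ?_
  have key : ∀ o : CostructuredArrow (Φ F J) e,
      ∃ (p : Σ g : CostructuredArrow J.op e.1, F.obj g.left)
        (hp : (J.op.leftKanExtension F).map p.1.hom
          ((J.op.leftKanExtensionUnit F).app p.1.left p.2) = e.2), o = mkObj e p hp := by
    intro o
    refine ⟨⟨CostructuredArrow.mk o.hom.val, o.left.2⟩, o.hom.2, ?_⟩
    rw [CostructuredArrow.eq_mk o]
    rfl
  obtain ⟨p, hp, rfl⟩ := key o₁
  obtain ⟨q, hq, rfl⟩ := key o₂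
  have hcol :
      colimit.ι (CostructuredArrow.proj J.op e.1 ⋙ F) p.1 p.2 =
      colimit.ι (CostructuredArrow.proj J.op e.1 ⋙ F) q.1 q.2 := by
    have h₁ := hc.comp_coconePointUniqueUpToIso_hom
      (colimit.isColimit (CostructuredArrow.proj J.op e.1 ⋙ F)) p.1
    have h₂ := hc.comp_coconePointUniqueUpToIso_hom
      (colimit.isColimit (CostructuredArrow.proj J.op e.1 ⋙ F)) q.1
    have e₁ := ConcreteCategory.congr_hom h₁ p.2
    have e₂ := ConcreteCategory.congr_hom h₂ q.2
    erw [types_comp_apply] at e₁ e₂; dsimp at e₁ e₂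
    rw [← e₁, ← e₂]; exact congrArg _ (hp.trans hq.symm)
  exact zig e p q (Types.colimit_eq hcol) hp hq

end Stmt9Aux

open Stmt9Aux in
/-- `F ⋆ (S ∘ J) ≅ (Lan_J F) ⋆ S`, either side existing if the other does.  Here the
weighted colimit of a functor `R` by a weight `W : Aᵒᵖ ⥤ Type` is realized as the conical
colimit of `R` precomposed with the (opposite of the) projection from the category of
elements of `W`, and `Lan_J F` is the left Kan extension of `F` along `J.op`. -/
theorem stmt9 {A B : Type u} [SmallCategory A] [SmallCategory B]
    {C : Type w} [Category.{v} C]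
    (F : Aᵒᵖ ⥤ Type u) (J : A ⥤ B) (S : B ⥤ C) :
    (HasColimit ((CategoryOfElements.π F).leftOp ⋙ (J ⋙ S)) ↔
      HasColimit ((CategoryOfElements.π (J.op.leftKanExtension F)).leftOp ⋙ S)) ∧
    ∀ (h₁ : HasColimit ((CategoryOfElements.π F).leftOp ⋙ (J ⋙ S)))
      (h₂ : HasColimit ((CategoryOfElements.π (J.op.leftKanExtension F)).leftOp ⋙ S)),
      Nonempty (@colimit _ _ _ _ ((CategoryOfElements.π F).leftOp ⋙ (J ⋙ S)) h₁ ≅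
        @colimit _ _ _ _ ((CategoryOfElements.π (J.op.leftKanExtension F)).leftOp ⋙ S) h₂) := by
  have hfin : (Φ F J).op.Final := inferInstance
  let iso : (Φ F J).op ⋙ ((CategoryOfElements.π (J.op.leftKanExtension F)).leftOp ⋙ S) ≅
      (CategoryOfElements.π F).leftOp ⋙ (J ⋙ S) :=
    NatIso.ofComponents (fun p => Iso.refl _) (by intros; simp [Φ]; erw [Category.comp_id, Category.id_comp]; rfl)
  constructor
  · constructor
    · intro h₁
      haveI : HasColimit ((Φ F J).op ⋙
          ((CategoryOfElements.π (J.op.leftKanExtension F)).leftOp ⋙ S)) :=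
        hasColimit_of_iso iso
      exact Functor.Final.hasColimit_of_comp (Φ F J).op
    · intro h₂
      haveI : HasColimit ((Φ F J).op ⋙
          ((CategoryOfElements.π (J.op.leftKanExtension F)).leftOp ⋙ S)) := inferInstance
      exact hasColimit_of_iso iso.symm
  · intro h₁ h₂
    haveI := h₁; haveI := h₂
    haveI : HasColimit ((Φ F J).op ⋙
        ((CategoryOfElements.π (J.op.leftKanExtension F)).leftOp ⋙ S)) := inferInstance
    exact ⟨(HasColimit.isoOfNatIso iso.symm).trans (Functor.Final.colimitIso (Φ F J).op _)⟩
end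

section
/- If a weight F : A^op → Set is Φ-flat (weighted colimits by F commute in Set with all limits whose weights lie in a class Φ) and G : A → B is any functor between small categories, then the left Kan extension Lan_G F : B^op → Set is also Φ-flat. -/
open CategoryTheory Limits

universe u

/-- A weight for limits: a small category together with a `Type`-valued functor on it. -/
structure LimitWeight : Type (u + 1) where
  shape : Type u
  [cat : SmallCategory shape]
  w : shape ⥤ Type u

attribute [instance] LimitWeight.cat

/-- A functor `F` preserves `W`-weighted limits, where the `W`-weighted limit of
`T : W.shape ⥤ C` is the conical limit of `T` precomposed with the projection from the
category of elements of the weight `W.w`. -/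
def PreservesWeightedLimits (W : LimitWeight.{u}) {C : Type*} [Category C]
    {E : Type*} [Category E] (F : C ⥤ E) : Prop :=
  ∀ T : W.shape ⥤ C, Nonempty (PreservesLimit (CategoryOfElements.π W.w ⋙ T) F)

/-- The functor `F ⋆ (−) : [A, Type] ⥤ Type` computing `F`-weighted colimits, realized as
the colimit over the (opposite of the) category of elements of `F`. -/
noncomputable def weightedColimFunctor {A : Type u} [SmallCategory A] (F : Aᵒᵖ ⥤ Type u) :
    (A ⥤ Type u) ⥤ Type u :=
  (Functor.whiskeringLeft F.Elementsᵒᵖ A (Type u)).obj (CategoryOfElements.π F).leftOp ⋙ colim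

/-- A weight `F : Aᵒᵖ ⥤ Type` is `Φ`-flat if the functor `F ⋆ (−)` computing `F`-weighted
colimits preserves all `Φ`-weighted limits. -/
def IsPhiFlat (Φ : Set LimitWeight.{u}) {A : Type u} [SmallCategory A]
    (F : Aᵒᵖ ⥤ Type u) : Prop :=
  ∀ W ∈ Φ, PreservesWeightedLimits W (weightedColimFunctor F)

namespace Stmt10Aux

open CategoryTheory.Functor

variable {A B : Type u} [SmallCategory A] [SmallCategory B]
  (F : Aᵒᵖ ⥤ Type u) (G : A ⥤ B)

/-- The functor from the category of elements of `F` to that of `Lan_G F`, induced by `G`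
and the unit of the left Kan extension. -/
@[simps]
noncomputable def elemMap : F.Elements ⥤ (G.op.leftKanExtension F).Elements where
  obj e := ⟨G.op.obj e.1, (G.op.leftKanExtensionUnit F).app e.1 e.2⟩
  map {e₁ e₂} f := ⟨G.op.map f.val, by
    have h := FunctorToTypes.naturality (G.op.leftKanExtensionUnit F) f.val e₁.2
    rw [f.2] at h
    exact h.symm⟩
  map_id e := by apply CategoryOfElements.ext; simp; rfl
  map_comp f g := by apply CategoryOfElements.ext; simp; rfl

/-- The chosen left Kan extension is a pointwise left Kan extension. -/
noncomputable def isPtwise :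
    (LeftExtension.mk _ (G.op.leftKanExtensionUnit F)).IsPointwiseLeftKanExtension :=
  isPointwiseLeftKanExtensionOfIsLeftKanExtension _ _

instance elemMap_initial : (elemMap F G).Initial := by
  constructor
  intro d
  -- the colimit cocone computing `Lan_G F` at `d.1`
  let t := (LeftExtension.mk _ (G.op.leftKanExtensionUnit F)).coconeAt d.1
  let D := CostructuredArrow.proj G.op d.1 ⋙ F
  have hc : IsColimit t := isPtwise F G d.1
  -- the value of a colimit element
  let val : (Σ j : CostructuredArrow G.op d.1, D.obj j) → (G.op.leftKanExtension F).obj d.1 :=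
    fun p => t.ι.app p.1 p.2
  -- building an object of the comma category from an element of the colimit mapping to `d.2`
  let mkObj : ∀ (p : Σ j : CostructuredArrow G.op d.1, D.obj j), val p = d.2 →
      CostructuredArrow (elemMap F G) d :=
    fun p hp => CostructuredArrow.mk
      (CategoryOfElements.homMk ((elemMap F G).obj ⟨p.1.left, p.2⟩) d p.1.hom (by
        exact hp))
  have val_rel : ∀ p q, D.ColimitTypeRel p q → val p = val q := by
    rintro p q ⟨f, hf⟩
    have := ConcreteCategory.congr_hom (t.w f) p.2
    dsimp [val]
    rw [hf]
    exact this.symm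
  have val_eqv : ∀ p q, Relation.EqvGen (D.ColimitTypeRel) p q → val p = val q := by
    intro p q h
    induction h with
    | rel p q h => exact val_rel p q h
    | refl p => rfl
    | symm p q h ih => exact ih.symm
    | trans p r q h₁ h₂ ih₁ ih₂ => exact ih₁.trans ih₂
  have step : ∀ p q (h : D.ColimitTypeRel p q) (hp : val p = d.2) (hq : val q = d.2),
      Nonempty ((mkObj p hp) ⟶ (mkObj q hq)) := by
    rintro p q ⟨f, hf⟩ hp hq
    refine ⟨CostructuredArrow.homMk (CategoryOfElements.homMk _ _ f.left hf.symm) ?_⟩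
    apply CategoryOfElements.ext
    exact CostructuredArrow.w f
  have main : ∀ p q, Relation.EqvGen (D.ColimitTypeRel) p q →
      ∀ (hp : val p = d.2) (hq : val q = d.2), Zigzag (mkObj p hp) (mkObj q hq) := by
    intro p q h
    induction h with
    | rel p q h => exact fun hp hq => Relation.ReflTransGen.single (Or.inl (step p q h hp hq))
    | refl p => exact fun hp hq => Relation.ReflTransGen.refl
    | symm p q h ih => exact fun hp hq => zigzag_symm.symm _ _ (ih hq hp)
    | trans p r q h₁ h₂ ih₁ ih₂ =>
        intro hp hq
        have hr : val r = d.2 := (val_eqv p r h₁).symm.trans hp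
        exact (ih₁ hp hr).trans (ih₂ hr hq)
  -- translating a `t.ι`-equality into a zigzag
  have mkEqv : ∀ p q (hp : val p = d.2) (hq : val q = d.2),
      Zigzag (mkObj p hp) (mkObj q hq) := by
    intro p q hp hq
    have h₁ : colimit.ι D p.1 p.2 =
        (hc.coconePointUniqueUpToIso (colimit.isColimit D)).hom (val p) :=
      (ConcreteCategory.congr_hom (IsColimit.comp_coconePointUniqueUpToIso_hom hc (colimit.isColimit D) p.1)
        p.2).symm
    have h₂ : colimit.ι D q.1 q.2 =
        (hc.coconePointUniqueUpToIso (colimit.isColimit D)).hom (val q) :=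
      (ConcreteCategory.congr_hom (IsColimit.comp_coconePointUniqueUpToIso_hom hc (colimit.isColimit D) q.1)
        q.2).symm
    exact main p q (Types.colimit_eq (by rw [h₁, h₂, hp, hq])) hp hq
  -- each object of the comma category is, up to iso, of the form `mkObj`
  let idx : CostructuredArrow (elemMap F G) d → Σ j : CostructuredArrow G.op d.1, D.obj j :=
    fun o => ⟨CostructuredArrow.mk o.hom.val, o.left.2⟩
  have idx_val : ∀ o : CostructuredArrow (elemMap F G) d, val (idx o) = d.2 := by
    intro o
    have := o.hom.2
    exact this
  have toMk : ∀ o : CostructuredArrow (elemMap F G) d, Zigzag o (mkObj (idx o) (idx_val o)) := by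
    intro o
    refine Relation.ReflTransGen.single (Or.inl ⟨?_⟩)
    exact (CostructuredArrow.eta o).hom
  obtain ⟨j, x, hx⟩ := Types.jointly_surjective_of_isColimit hc d.2
  have hne : Nonempty (CostructuredArrow (elemMap F G) d) := ⟨mkObj ⟨j, x⟩ hx⟩
  exact @zigzag_isConnected _ _ hne (fun o₁ o₂ =>
    ((toMk o₁).trans (mkEqv _ _ (idx_val o₁) (idx_val o₂))).trans (zigzag_symm.symm _ _ (toMk o₂)))

instance elemMap_op_final : ((elemMap F G).op).Final :=
  Functor.final_op_of_initial _

/-- The key natural isomorphism: weighted colimits by `Lan_G F` are computed by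
restricting along `G` and taking weighted colimits by `F`. -/
noncomputable def wcIso :
    weightedColimFunctor (G.op.leftKanExtension F) ≅
      (whiskeringLeft A B (Type u)).obj G ⋙ weightedColimFunctor F :=
  isoWhiskerLeft ((whiskeringLeft _ _ (Type u)).obj
      (CategoryOfElements.π (G.op.leftKanExtension F)).leftOp)
    (Functor.Final.colimIso (elemMap F G).op).symm ≪≫
  isoWhiskerRight
    (NatIso.ofComponents (fun H => Iso.refl _) (by intros; rfl) :
      (whiskeringLeft _ _ (Type u)).obj (CategoryOfElements.π (G.op.leftKanExtension F)).leftOp ⋙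
        (whiskeringLeft _ _ (Type u)).obj (elemMap F G).op ≅
      (whiskeringLeft A B (Type u)).obj G ⋙
        (whiskeringLeft _ _ (Type u)).obj (CategoryOfElements.π F).leftOp)
    colim

end Stmt10Aux

/-- If `F : Aᵒᵖ ⥤ Type` is `Φ`-flat and `G : A ⥤ B` is any functor between small
categories, then the left Kan extension of `F` along `G` is `Φ`-flat. -/
theorem stmt10 (Φ : Set LimitWeight.{u}) {A B : Type u} [SmallCategory A] [SmallCategory B]
    (F : Aᵒᵖ ⥤ Type u) (G : A ⥤ B) (hF : IsPhiFlat Φ F) :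
    IsPhiFlat Φ (G.op.leftKanExtension F) := by
  intro W hW T
  haveI h1 : PreservesLimit ((CategoryOfElements.π W.w ⋙ T) ⋙
      (Functor.whiskeringLeft A B (Type u)).obj G) (weightedColimFunctor F) :=
    (hF W hW (T ⋙ (Functor.whiskeringLeft A B (Type u)).obj G)).some
  haveI h2 : PreservesLimit (CategoryOfElements.π W.w ⋙ T)
      ((Functor.whiskeringLeft A B (Type u)).obj G ⋙ weightedColimFunctor F) :=
    inferInstance
  exact ⟨preservesLimit_of_natIso _ (Stmt10Aux.wcIso F G).symm⟩
end

section
/- Let A and B be small categories with finite products, G : A → B any functor, and M : A → Set a finite-product-preserving functor. Then the left Kan extension Lan_G M : B → Set preserves finite products. -/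
open CategoryTheory Limits

universe u

namespace Stmt11Aux

variable {A B : Type u} [SmallCategory A] [SmallCategory B]
  [HasFiniteProducts A] [HasFiniteProducts B]
  (G : A ⥤ B) (M : A ⥤ Type u) [PreservesFiniteProducts M]

/-- The diagram whose colimit computes the pointwise left Kan extension at `b`. -/
abbrev D (b : B) : CostructuredArrow G b ⥤ Type u :=
  CostructuredArrow.proj G b ⋙ M

variable {G}

/-- The comparison equivalence `M (a₁ ⨯ a₂) ≃ M a₁ × M a₂`. -/
noncomputable def e (a₁ a₂ : A) : M.obj (a₁ ⨯ a₂) ≃ M.obj a₁ × M.obj a₂ :=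
  (PreservesLimitPair.iso M a₁ a₂ ≪≫ Types.binaryProductIso _ _).toEquiv

lemma e_apply (a₁ a₂ : A) (y : M.obj (a₁ ⨯ a₂)) :
    e M a₁ a₂ y = (M.map prod.fst y, M.map prod.snd y) := by
  have h1 := ConcreteCategory.congr_hom (Types.binaryProductIso_hom_comp_fst (M.obj a₁) (M.obj a₂))
    ((PreservesLimitPair.iso M a₁ a₂).hom y)
  have h2 := ConcreteCategory.congr_hom (Types.binaryProductIso_hom_comp_snd (M.obj a₁) (M.obj a₂))
    ((PreservesLimitPair.iso M a₁ a₂).hom y)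
  have h3 := ConcreteCategory.congr_hom (prodComparison_fst M a₁ a₂) y
  have h4 := ConcreteCategory.congr_hom (prodComparison_snd M a₁ a₂) y
  have : e M a₁ a₂ y = (Types.binaryProductIso _ _).hom ((PreservesLimitPair.iso M a₁ a₂).hom y) :=
    rfl
  ext
  · simpa [this, PreservesLimitPair.iso_hom] using h1.trans (by exact h3)
  · simpa [this, PreservesLimitPair.iso_hom] using h2.trans (by exact h4)

/-- Lift a pair of elements to an element of `M (a₁ ⨯ a₂)`. -/
noncomputable def lift {a₁ a₂ : A} (x₁ : M.obj a₁) (x₂ : M.obj a₂) : M.obj (a₁ ⨯ a₂) :=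
  (e M a₁ a₂).symm (x₁, x₂)

lemma lift_fst {a₁ a₂ : A} (x₁ : M.obj a₁) (x₂ : M.obj a₂) :
    M.map prod.fst (lift M x₁ x₂) = x₁ := by
  have := (e M a₁ a₂).apply_symm_apply (x₁, x₂)
  rw [e_apply] at this
  exact congr_arg Prod.fst this

lemma lift_snd {a₁ a₂ : A} (x₁ : M.obj a₁) (x₂ : M.obj a₂) :
    M.map prod.snd (lift M x₁ x₂) = x₂ := by
  have := (e M a₁ a₂).apply_symm_apply (x₁, x₂)
  rw [e_apply] at this
  exact congr_arg Prod.snd this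

lemma eq_lift {a₁ a₂ : A} (y : M.obj (a₁ ⨯ a₂)) {x₁ x₂}
    (h1 : M.map prod.fst y = x₁) (h2 : M.map prod.snd y = x₂) : y = lift M x₁ x₂ := by
  apply (e M a₁ a₂).injective
  rw [e_apply, e_apply, lift_fst, lift_snd, h1, h2]

lemma map_lift {a₁ a₂ a₁' a₂' : A} (g₁ : a₁ ⟶ a₁') (g₂ : a₂ ⟶ a₂')
    (x₁ : M.obj a₁) (x₂ : M.obj a₂) :
    M.map (prod.map g₁ g₂) (lift M x₁ x₂) = lift M (M.map g₁ x₁) (M.map g₂ x₂) := by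
  apply eq_lift
  · rw [← FunctorToTypes.map_comp_apply, prod.map_fst, FunctorToTypes.map_comp_apply, lift_fst]
  · rw [← FunctorToTypes.map_comp_apply, prod.map_snd, FunctorToTypes.map_comp_apply, lift_snd]

lemma diag_lift {a : A} (x : M.obj a) :
    M.map (prod.lift (𝟙 a) (𝟙 a)) x = lift M x x := by
  apply eq_lift
  · rw [← FunctorToTypes.map_comp_apply, prod.lift_fst, FunctorToTypes.map_id_apply]
  · rw [← FunctorToTypes.map_comp_apply, prod.lift_snd, FunctorToTypes.map_id_apply]

variable (G)

/-- The "product" object of the costructured arrow category. -/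
@[simps! left hom]
noncomputable def obj12 {b₁ b₂ : B} (j₁ : CostructuredArrow G b₁) (j₂ : CostructuredArrow G b₂) :
    CostructuredArrow G (b₁ ⨯ b₂) :=
  CostructuredArrow.mk (Y := j₁.left ⨯ j₂.left)
    (prod.lift (G.map prod.fst ≫ j₁.hom) (G.map prod.snd ≫ j₂.hom))

/-- Functoriality of `obj12` in the first variable. -/
noncomputable def hom12l {b₁ b₂ : B} {j₁ j₁' : CostructuredArrow G b₁} (g : j₁ ⟶ j₁')
    (j₂ : CostructuredArrow G b₂) : obj12 G j₁ j₂ ⟶ obj12 G j₁' j₂ :=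
  CostructuredArrow.homMk (prod.map g.left (𝟙 _)) (by
    apply Limits.prod.hom_ext
    · dsimp only [obj12]
      simp only [CostructuredArrow.mk_hom_eq_self, Category.assoc, prod.lift_fst,
        ← G.map_comp_assoc, prod.map_fst]
      rw [G.map_comp_assoc]
      simp
    · dsimp only [obj12]
      simp only [CostructuredArrow.mk_hom_eq_self, Category.assoc, prod.lift_snd,
        ← G.map_comp_assoc, prod.map_snd]
      simp)

/-- Functoriality of `obj12` in the second variable. -/
noncomputable def hom12r {b₁ b₂ : B} (j₁ : CostructuredArrow G b₁) {j₂ j₂' : CostructuredArrow G b₂}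
    (g : j₂ ⟶ j₂') : obj12 G j₁ j₂ ⟶ obj12 G j₁ j₂' :=
  CostructuredArrow.homMk (prod.map (𝟙 _) g.left) (by
    apply Limits.prod.hom_ext
    · dsimp only [obj12]
      simp only [CostructuredArrow.mk_hom_eq_self, Category.assoc, prod.lift_fst,
        ← G.map_comp_assoc, prod.map_fst]
      simp
    · dsimp only [obj12]
      simp only [CostructuredArrow.mk_hom_eq_self, Category.assoc, prod.lift_snd,
        ← G.map_comp_assoc, prod.map_snd]
      rw [G.map_comp_assoc]
      simp)

variable [∀ b : B, HasColimit (D G M b)]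

/-- The inner cocone used to define the inverse of the product comparison map. -/
@[simps]
noncomputable def innerCocone (b₁ b₂ : B) (j₁ : CostructuredArrow G b₁) (x₁ : M.obj j₁.left) :
    Cocone (D G M b₂) where
  pt := colimit (D G M (b₁ ⨯ b₂))
  ι :=
    { app := fun j₂ => ↾fun x₂ => colimit.ι (D G M (b₁ ⨯ b₂)) (obj12 G j₁ j₂) (lift M x₁ x₂)
      naturality := fun j₂ j₂' g => by
        ext (x₂ : M.obj j₂.left)
        have := Types.Colimit.w_apply (F := D G M (b₁ ⨯ b₂)) (f := hom12r G j₁ g)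
          (j := obj12 G j₁ j₂) (x := lift M x₁ x₂)
        simp only [Functor.comp_obj, CostructuredArrow.proj_obj] at this ⊢
        have hmap : (D G M (b₁ ⨯ b₂)).map (hom12r G j₁ g) (lift M x₁ x₂)
            = lift M x₁ (M.map g.left x₂) := by
          show M.map (prod.map (𝟙 _) g.left) (lift M x₁ x₂) = _
          rw [map_lift, FunctorToTypes.map_id_apply]
        rw [hmap] at this
        exact this }

/-- The outer cocone used to define the inverse of the product comparison map. -/
@[simps]
noncomputable def outerCocone (b₁ b₂ : B) : Cocone (D G M b₁) where
  pt := colimit (D G M b₂) → colimit (D G M (b₁ ⨯ b₂))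
  ι :=
    { app := fun j₁ => ↾fun x₁ => (colimit.desc (D G M b₂) (innerCocone G M b₁ b₂ j₁ x₁) : _ → _)
      naturality := fun j₁ j₁' g => by
        simp only [Functor.const_obj_map, Category.comp_id]
        ext (x₁ : M.obj j₁.left)
        change (colimit.desc (D G M b₂) (innerCocone G M b₁ b₂ j₁' (M.map g.left x₁)) : _ → _) =
          (colimit.desc (D G M b₂) (innerCocone G M b₁ b₂ j₁ x₁) : _ → _)
        refine congrArg (fun (f : colimit (D G M b₂) ⟶ colimit (D G M (b₁ ⨯ b₂))) => (f : _ → _))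
          (colimit.hom_ext (fun j₂ => ?_))
        ext (x₂ : M.obj j₂.left)
        show colimit.desc (D G M b₂) (innerCocone G M b₁ b₂ j₁' (M.map g.left x₁))
            (colimit.ι (D G M b₂) j₂ x₂) =
          colimit.desc (D G M b₂) (innerCocone G M b₁ b₂ j₁ x₁) (colimit.ι (D G M b₂) j₂ x₂)
        erw [Types.Colimit.ι_desc_apply, Types.Colimit.ι_desc_apply]
        simp only [innerCocone_ι_app]
        have := Types.Colimit.w_apply (F := D G M (b₁ ⨯ b₂)) (f := hom12l G g j₂)
          (j := obj12 G j₁ j₂) (x := lift M x₁ x₂)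
        have hmap : (D G M (b₁ ⨯ b₂)).map (hom12l G g j₂) (lift M x₁ x₂)
            = lift M (M.map g.left x₁) x₂ := by
          show M.map (prod.map g.left (𝟙 _)) (lift M x₁ x₂) = _
          rw [map_lift, FunctorToTypes.map_id_apply]
        rw [hmap] at this
        exact this }

/-- The inverse of the product comparison map. -/
noncomputable def inv0 (b₁ b₂ : B) (z₁ : colimit (D G M b₁)) (z₂ : colimit (D G M b₂)) :
    colimit (D G M (b₁ ⨯ b₂)) :=
  colimit.desc (D G M b₁) (outerCocone G M b₁ b₂) z₁ z₂

lemma inv0_ι (b₁ b₂ : B) (j₁ : CostructuredArrow G b₁) (j₂ : CostructuredArrow G b₂)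
    (x₁ : M.obj j₁.left) (x₂ : M.obj j₂.left) :
    inv0 G M b₁ b₂ (colimit.ι (D G M b₁) j₁ x₁) (colimit.ι (D G M b₂) j₂ x₂)
      = colimit.ι (D G M (b₁ ⨯ b₂)) (obj12 G j₁ j₂) (lift M x₁ x₂) := by
  unfold inv0
  erw [Types.Colimit.ι_desc_apply]
  show colimit.desc (D G M b₂) (innerCocone G M b₁ b₂ j₁ x₁) _ = _
  erw [Types.Colimit.ι_desc_apply]
  rfl

/-- The diagonal morphism. -/
noncomputable def homDiag {b₁ b₂ : B} (j : CostructuredArrow G (b₁ ⨯ b₂)) :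
    j ⟶ obj12 G ((CostructuredArrow.map (prod.fst : b₁ ⨯ b₂ ⟶ b₁)).obj j)
      ((CostructuredArrow.map (prod.snd : b₁ ⨯ b₂ ⟶ b₂)).obj j) :=
  CostructuredArrow.homMk (prod.lift (𝟙 _) (𝟙 _)) (by
    apply Limits.prod.hom_ext
    · dsimp only [obj12]
      simp only [CostructuredArrow.mk_hom_eq_self, Category.assoc, prod.lift_fst,
        ← G.map_comp_assoc]
      simp
    · dsimp only [obj12]
      simp only [CostructuredArrow.mk_hom_eq_self, Category.assoc, prod.lift_snd,
        ← G.map_comp_assoc]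
      simp)

/-- The first projection morphism. -/
noncomputable def homFst {b₁ b₂ : B} (j₁ : CostructuredArrow G b₁) (j₂ : CostructuredArrow G b₂) :
    (CostructuredArrow.map (prod.fst : b₁ ⨯ b₂ ⟶ b₁)).obj (obj12 G j₁ j₂) ⟶ j₁ :=
  CostructuredArrow.homMk prod.fst (by exact (prod.lift_fst _ _).symm)

/-- The second projection morphism. -/
noncomputable def homSnd {b₁ b₂ : B} (j₁ : CostructuredArrow G b₁) (j₂ : CostructuredArrow G b₂) :
    (CostructuredArrow.map (prod.snd : b₁ ⨯ b₂ ⟶ b₂)).obj (obj12 G j₁ j₂) ⟶ j₂ :=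
  CostructuredArrow.homMk prod.snd (by exact (prod.lift_snd _ _).symm)

lemma Lmap_ι {b b' : B} (h : b ⟶ b') (j : CostructuredArrow G b) (x : M.obj j.left) :
    (Functor.pointwiseLeftKanExtension G M).map h (colimit.ι (D G M b) j x)
      = colimit.ι (D G M b') ((CostructuredArrow.map h).obj j) x := by
  show colimit.desc (D G M b) _ (colimit.ι (D G M b) j x) = _
  erw [Types.Colimit.ι_desc_apply]
  rfl

lemma comp_fst (b₁ b₂ : B) (z : (Functor.pointwiseLeftKanExtension G M).obj (b₁ ⨯ b₂)) :
    ((Types.binaryProductIso ((Functor.pointwiseLeftKanExtension G M).obj b₁)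
        ((Functor.pointwiseLeftKanExtension G M).obj b₂)).hom
      (prodComparison (Functor.pointwiseLeftKanExtension G M) b₁ b₂ z)).1
      = (Functor.pointwiseLeftKanExtension G M).map prod.fst z := by
  have h1 := ConcreteCategory.congr_hom (Types.binaryProductIso_hom_comp_fst
    ((Functor.pointwiseLeftKanExtension G M).obj b₁)
    ((Functor.pointwiseLeftKanExtension G M).obj b₂))
    (prodComparison (Functor.pointwiseLeftKanExtension G M) b₁ b₂ z)
  have h2 := ConcreteCategory.congr_hom (prodComparison_fst (Functor.pointwiseLeftKanExtension G M) b₁ b₂) z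
  exact h1.trans h2

lemma comp_snd (b₁ b₂ : B) (z : (Functor.pointwiseLeftKanExtension G M).obj (b₁ ⨯ b₂)) :
    ((Types.binaryProductIso ((Functor.pointwiseLeftKanExtension G M).obj b₁)
        ((Functor.pointwiseLeftKanExtension G M).obj b₂)).hom
      (prodComparison (Functor.pointwiseLeftKanExtension G M) b₁ b₂ z)).2
      = (Functor.pointwiseLeftKanExtension G M).map prod.snd z := by
  have h1 := ConcreteCategory.congr_hom (Types.binaryProductIso_hom_comp_snd
    ((Functor.pointwiseLeftKanExtension G M).obj b₁)
    ((Functor.pointwiseLeftKanExtension G M).obj b₂))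
    (prodComparison (Functor.pointwiseLeftKanExtension G M) b₁ b₂ z)
  have h2 := ConcreteCategory.congr_hom (prodComparison_snd (Functor.pointwiseLeftKanExtension G M) b₁ b₂) z
  exact h1.trans h2

lemma isIso_prodComparison (b₁ b₂ : B) :
    IsIso (prodComparison (Functor.pointwiseLeftKanExtension G M) b₁ b₂) := by
  rw [isIso_iff_bijective, Function.bijective_iff_has_inverse]
  refine ⟨fun p => inv0 G M b₁ b₂
      ((Types.binaryProductIso _ _).hom p).1 ((Types.binaryProductIso _ _).hom p).2, ?_, ?_⟩
  · intro z
    obtain ⟨j, x, rfl⟩ := Types.jointly_surjective' (F := D G M (b₁ ⨯ b₂)) z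
    dsimp only
    erw [comp_fst, comp_snd, Lmap_ι, Lmap_ι, inv0_ι]
    have hw := Types.Colimit.w_apply (F := D G M (b₁ ⨯ b₂)) (f := homDiag G j) (x := x)
    have hmap : (D G M (b₁ ⨯ b₂)).map (homDiag G j) x = lift M x x := by
      show M.map (prod.lift (𝟙 _) (𝟙 _)) x = _
      exact diag_lift M x
    rw [hmap] at hw
    exact hw
  · intro p
    obtain ⟨j₁, x₁, h₁⟩ := Types.jointly_surjective' (F := D G M b₁)
      (((Types.binaryProductIso _ _).hom p).1)
    obtain ⟨j₂, x₂, h₂⟩ := Types.jointly_surjective' (F := D G M b₂)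
      (((Types.binaryProductIso _ _).hom p).2)
    apply (Types.binaryProductIso ((Functor.pointwiseLeftKanExtension G M).obj b₁)
      ((Functor.pointwiseLeftKanExtension G M).obj b₂)).toEquiv.injective
    have hg : inv0 G M b₁ b₂ ((Types.binaryProductIso _ _).hom p).1
        ((Types.binaryProductIso _ _).hom p).2
        = colimit.ι (D G M (b₁ ⨯ b₂)) (obj12 G j₁ j₂) (lift M x₁ x₂) := by
      erw [← h₁, ← h₂, inv0_ι]
    show (Types.binaryProductIso ((Functor.pointwiseLeftKanExtension G M).obj b₁)
        ((Functor.pointwiseLeftKanExtension G M).obj b₂)).hom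
        (prodComparison (Functor.pointwiseLeftKanExtension G M) b₁ b₂
          (inv0 G M b₁ b₂ ((Types.binaryProductIso _ _).hom p).1
            ((Types.binaryProductIso _ _).hom p).2)) = (Types.binaryProductIso _ _).hom p
    apply Prod.ext
    · erw [comp_fst, hg, Lmap_ι]
      have hw := Types.Colimit.w_apply (F := D G M b₁) (f := homFst G j₁ j₂)
        (j := (CostructuredArrow.map (prod.fst : b₁ ⨯ b₂ ⟶ b₁)).obj (obj12 G j₁ j₂)) (x := lift M x₁ x₂)
      have hmap : (D G M b₁).map (homFst G j₁ j₂) (lift M x₁ x₂) = x₁ := by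
        show M.map prod.fst (lift M x₁ x₂) = _
        exact lift_fst M x₁ x₂
      rw [hmap] at hw
      exact hw.symm.trans h₁
    · erw [comp_snd, hg, Lmap_ι]
      have hw := Types.Colimit.w_apply (F := D G M b₂) (f := homSnd G j₁ j₂)
        (j := (CostructuredArrow.map (prod.snd : b₁ ⨯ b₂ ⟶ b₂)).obj (obj12 G j₁ j₂)) (x := lift M x₁ x₂)
      have hmap : (D G M b₂).map (homSnd G j₁ j₂) (lift M x₁ x₂) = x₂ := by
        show M.map prod.snd (lift M x₁ x₂) = _
        exact lift_snd M x₁ x₂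
      rw [hmap] at hw
      exact hw.symm.trans h₂

lemma preservesPair (b₁ b₂ : B) :
    PreservesLimit (pair b₁ b₂) (Functor.pointwiseLeftKanExtension G M) := by
  have := isIso_prodComparison G M b₁ b₂
  exact PreservesLimitPair.of_iso_prod_comparison _ _ _

lemma preservesShapePair :
    PreservesLimitsOfShape (Discrete WalkingPair) (Functor.pointwiseLeftKanExtension G M) :=
  ⟨fun {K} => by
    haveI := preservesPair G M (K.obj ⟨WalkingPair.left⟩) (K.obj ⟨WalkingPair.right⟩)
    exact preservesLimit_of_iso_diagram _ (diagramIsoPair K).symm⟩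

lemma subsingleton_top : Subsingleton (colimit (D G M (⊤_ B))) := by
  constructor
  intro z z'
  obtain ⟨j, x, rfl⟩ := Types.jointly_surjective' (F := D G M (⊤_ B)) z
  obtain ⟨j', x', rfl⟩ := Types.jointly_surjective' (F := D G M (⊤_ B)) z'
  let p : CostructuredArrow G (⊤_ B) :=
    CostructuredArrow.mk (Y := j.left ⨯ j'.left) (terminal.from _)
  let m : p ⟶ j := CostructuredArrow.homMk prod.fst (terminal.hom_ext _ _)
  let m' : p ⟶ j' := CostructuredArrow.homMk prod.snd (terminal.hom_ext _ _)
  have hw := Types.Colimit.w_apply (F := D G M (⊤_ B)) (f := m) (j := p) (x := lift M x x')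
  have hw' := Types.Colimit.w_apply (F := D G M (⊤_ B)) (f := m') (j := p) (x := lift M x x')
  have hm : (D G M (⊤_ B)).map m (lift M x x') = x := by
    show M.map prod.fst (lift M x x') = _
    exact lift_fst M x x'
  have hm' : (D G M (⊤_ B)).map m' (lift M x x') = x' := by
    show M.map prod.snd (lift M x x') = _
    exact lift_snd M x x'
  rw [hm] at hw
  rw [hm'] at hw'
  exact hw.trans hw'.symm

/-- A point of `M (⊤_ A)`. -/
noncomputable def pt0 : M.obj (⊤_ A) :=
  (PreservesTerminal.iso M).inv (Types.terminalIso.inv PUnit.unit)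

lemma preservesTerm :
    PreservesLimit (Functor.empty.{0} B) (Functor.pointwiseLeftKanExtension G M) := by
  haveI : Subsingleton ((Functor.pointwiseLeftKanExtension G M).obj (⊤_ B)) :=
    subsingleton_top G M
  haveI : Unique ((Functor.pointwiseLeftKanExtension G M).obj (⊤_ B)) :=
    uniqueOfSubsingleton (colimit.ι (D G M (⊤_ B))
      (CostructuredArrow.mk (Y := ⊤_ A) (terminal.from _)) (pt0 M))
  exact preservesTerminal_of_iso _
    ((Equiv.equivPUnit.{u + 1, u + 1} _).toIso ≪≫ Types.terminalIso.symm)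

lemma preservesFiniteProductsL :
    PreservesFiniteProducts (Functor.pointwiseLeftKanExtension G M) := by
  haveI := preservesShapePair G M
  haveI := preservesTerm G M
  haveI := preservesLimitsOfShape_pempty_of_preservesTerminal
    (Functor.pointwiseLeftKanExtension G M)
  exact PreservesFiniteProducts.of_preserves_binary_and_terminal _

end Stmt11Aux

/-- If `A` and `B` are small categories with finite products, `G : A ⥤ B` is any functor,
and `M : A ⥤ Type` preserves finite products, then `Lan_G M : B ⥤ Type` preserves finite
products. -/
theorem stmt11 {A B : Type u} [SmallCategory A] [SmallCategory B]
    [HasFiniteProducts A] [HasFiniteProducts B]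
    (G : A ⥤ B) (M : A ⥤ Type u) [PreservesFiniteProducts M] :
    Nonempty (PreservesFiniteProducts (G.leftKanExtension M)) := by
  haveI := Stmt11Aux.preservesFiniteProductsL G M
  have i : G.leftKanExtension M ≅ Functor.pointwiseLeftKanExtension G M :=
    Functor.leftKanExtensionUnique (G.leftKanExtension M) (G.leftKanExtensionUnit M)
      (Functor.pointwiseLeftKanExtension G M) (Functor.pointwiseLeftKanExtensionUnit G M)
  exact ⟨⟨fun J => preservesLimitsOfShape_of_natIso i.symm⟩⟩
end

section
/- In the presheaf category [C^op, Set], an object is a retract of a finite coproduct of representables if and only if it is a finite coproduct of retracts of representables. -/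
open CategoryTheory Limits

universe u

namespace Stmt12Aux

variable {C : Type u} [SmallCategory C]

/-- Concrete model of the coproduct of representables. -/
@[simps]
def SigmaRep {n : ℕ} (c : Fin n → C) : Cᵒᵖ ⥤ Type u where
  obj X := Σ j : Fin n, (X.unop ⟶ c j)
  map f := ↾fun t => ⟨t.1, f.unop ≫ t.2⟩
  map_id := by intro X; ext t : 3; simp
  map_comp := by intros; ext t : 3; simp

/-- Inclusions into the concrete coproduct. -/
@[simps]
def repIncl {n : ℕ} (c : Fin n → C) (j : Fin n) : yoneda.obj (c j) ⟶ SigmaRep c where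
  app X := ↾fun f => ⟨j, f⟩
  naturality := by intros; rfl

def sigmaRepCofan {n : ℕ} (c : Fin n → C) : Cofan (fun j => yoneda.obj (c j)) :=
  Cofan.mk (SigmaRep c) (repIncl c)

def sigmaRepIsColimit {n : ℕ} (c : Fin n → C) : IsColimit (sigmaRepCofan c) :=
  mkCofanColimit _
    (fun s =>
      { app := fun X => ↾fun (t : (SigmaRep c).obj X) => (s.inj t.1).app X t.2
        naturality := by
          intro X Y f
          ext t
          exact NatTrans.naturality_apply (s.inj t.1) f t.2 })
    (fun s j => by
      ext X f
      rfl)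
    (fun s m hm => by
      ext X t
      obtain ⟨j, f⟩ := t
      exact ConcreteCategory.congr_hom (congrArg (fun φ => NatTrans.app φ X) (hm j)) f)

/-- Iso between the abstract and concrete coproducts. -/
noncomputable def sigmaRepIso {n : ℕ} (c : Fin n → C) :
    (∐ fun j => yoneda.obj (c j)) ≅ SigmaRep c :=
  (colimit.isColimit _).coconePointUniqueUpToIso (sigmaRepIsColimit c)

section Forward

variable {n : ℕ} {c : Fin n → C} {P : Cᵒᵖ ⥤ Type u} (i' : P ⟶ SigmaRep c)

/-- The part of `P` mapping into the `j`-th summand. -/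
@[simps]
def Part (j : Fin n) : Cᵒᵖ ⥤ Type u where
  obj X := { x : P.obj X // (i'.app X x).1 = j }
  map {X Y} f := ↾fun x => ⟨P.map f x.1, by
    have h := ConcreteCategory.congr_hom (i'.naturality f) x.1
    simp only [types_comp_apply] at h
    rw [h]
    exact x.2⟩
  map_id := by intro X; ext x : 3; exact Subtype.ext (ConcreteCategory.congr_hom (P.map_id X) x.1)
  map_comp := by intro X Y Z f g; ext x : 3; exact Subtype.ext (ConcreteCategory.congr_hom (P.map_comp f g) x.1)

/-- Inclusion of a part into `P`. -/
@[simps]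
def partIncl (j : Fin n) : Part i' j ⟶ P where
  app X := ↾fun x => x.1
  naturality := by intros; rfl

variable (r' : SigmaRep c ⟶ P) (hir : i' ≫ r' = 𝟙 P)

/-- The index of the summand the idempotent sends summand `j` into. -/
noncomputable def sigmaFun (j : Fin n) : Fin n :=
  (i'.app (Opposite.op (c j)) (r'.app (Opposite.op (c j)) ⟨j, 𝟙 (c j)⟩)).1

/-- The comparison map underlying the idempotent. -/
noncomputable def gFun (j : Fin n) : c j ⟶ c (sigmaFun i' r' j) :=
  (i'.app (Opposite.op (c j)) (r'.app (Opposite.op (c j)) ⟨j, 𝟙 (c j)⟩)).2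

lemma e_app (X : Cᵒᵖ) (j : Fin n) (f : X.unop ⟶ c j) :
    i'.app X (r'.app X ⟨j, f⟩) = ⟨sigmaFun i' r' j, f ≫ gFun i' r' j⟩ := by
  have h1 : (⟨j, f⟩ : (SigmaRep c).obj X) = (SigmaRep c).map f.op ⟨j, 𝟙 (c j)⟩ := by
    show (⟨j, f⟩ : Σ j' : Fin n, X.unop ⟶ c j') = ⟨j, f ≫ 𝟙 (c j)⟩
    simp
  have h2 := NatTrans.naturality_apply (r' ≫ i') f.op
      (⟨j, 𝟙 (c j)⟩ : (SigmaRep c).obj (Opposite.op (c j)))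
  simp only [NatTrans.comp_app_apply] at h2
  rw [h1, h2]
  rfl

include hir in
lemma sigma_fix (X : Cᵒᵖ) (x : P.obj X) :
    sigmaFun i' r' (i'.app X x).1 = (i'.app X x).1 := by
  have hx : r'.app X (i'.app X x) = x := ConcreteCategory.congr_hom (NatTrans.congr_app hir X) x
  have h := e_app i' r' X (i'.app X x).1 (i'.app X x).2
  rw [show (⟨(i'.app X x).1, (i'.app X x).2⟩ : (SigmaRep c).obj X) = i'.app X x from rfl, hx] at h
  exact (congrArg Sigma.fst h).symm

variable {j : Fin n}

/-- Extract the morphism component of an element of the concrete coproduct. -/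
def extract {X : Cᵒᵖ} {j : Fin n} (t : (SigmaRep c).obj X) (h : t.1 = j) : X.unop ⟶ c j :=
  t.2 ≫ eqToHom (congrArg c h)

lemma extract_congr {X : Cᵒᵖ} {j : Fin n} {t t' : (SigmaRep c).obj X} (ht : t = t')
    (h : t.1 = j) (h' : t'.1 = j) : extract t h = extract t' h' := by
  subst ht; rfl

lemma extract_map {X Y : Cᵒᵖ} {j : Fin n} (f : X ⟶ Y) (t : (SigmaRep c).obj X) (h : t.1 = j) :
    extract ((SigmaRep c).map f t) h = f.unop ≫ extract t h :=
  Category.assoc _ _ _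

/-- Map from the `j`-th part to the representable. -/
@[simps]
def partToRep (j : Fin n) : Part i' j ⟶ yoneda.obj (c j) where
  app X := ↾fun (x : (Part i' j).obj X) => extract (i'.app X x.1) x.2
  naturality := by
    intro X Y f
    ext x : 3
    have h := ConcreteCategory.congr_hom (i'.naturality f) x.1
    simp only [types_comp_apply] at h
    have h0 : (i'.app Y (P.map f x.1)).1 = j := (congrArg Sigma.fst h).trans x.2
    exact (extract_congr h h0 x.2).trans (extract_map f (i'.app X x.1) x.2)

/-- Map from the representable back to the `j`-th part, given that `j` is fixed. -/
@[simps]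
noncomputable def repToPart (hj : sigmaFun i' r' j = j) : yoneda.obj (c j) ⟶ Part i' j where
  app X := ↾fun f => ⟨r'.app X ⟨j, f⟩, by rw [e_app i' r' X j f]; exact hj⟩
  naturality := by
    intro X Y f
    ext g : 3
    refine Subtype.ext ?_
    have h := ConcreteCategory.congr_hom (r'.naturality f) (⟨j, g⟩ : (SigmaRep c).obj X)
    show r'.app Y ⟨j, f.unop ≫ g⟩ = P.map f (r'.app X ⟨j, g⟩)
    exact h

include hir in
lemma part_retract (hj : sigmaFun i' r' j = j) :
    partToRep i' j ≫ repToPart i' r' hj = 𝟙 (Part i' j) := by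
  ext X x
  obtain ⟨x, hx⟩ := x
  refine Subtype.ext ?_
  show r'.app X ⟨j, extract (i'.app X x) hx⟩ = x
  have hsig : (⟨j, extract (i'.app X x) hx⟩ : (SigmaRep c).obj X)
      = i'.app X x := by
    subst hx
    simp [extract]
    rfl
  rw [hsig]
  exact ConcreteCategory.congr_hom (NatTrans.congr_app hir X) x

include hir in
lemma part_empty (hj : sigmaFun i' r' j ≠ j) (X : Cᵒᵖ) (x : (Part i' j).obj X) : False := by
  obtain ⟨x, hx⟩ := x
  have := sigma_fix i' r' hir X x
  rw [hx] at this
  exact hj this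

end Forward

end Stmt12Aux

open Stmt12Aux in
/-- In a presheaf category `[Cᵒᵖ, Type]`, an object is a retract of a finite coproduct of
representables if and only if it is a finite coproduct of retracts of representables. -/
theorem stmt12 {C : Type u} [SmallCategory C] (P : Cᵒᵖ ⥤ Type u) :
    (∃ (n : ℕ) (c : Fin n → C) (i : P ⟶ ∐ fun j => yoneda.obj (c j))
        (r : (∐ fun j => yoneda.obj (c j)) ⟶ P), i ≫ r = 𝟙 P) ↔
      (∃ (n : ℕ) (Q : Fin n → (Cᵒᵖ ⥤ Type u)),
        (∀ j, ∃ (c : C) (i : Q j ⟶ yoneda.obj c) (r : yoneda.obj c ⟶ Q j),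
          i ≫ r = 𝟙 (Q j)) ∧
        Nonempty (P ≅ ∐ Q)) := by
  constructor
  · rintro ⟨n, c, i, r, hir⟩
    -- transport along the concrete coproduct
    set i' : P ⟶ SigmaRep c := i ≫ (sigmaRepIso c).hom with hi'
    set r' : SigmaRep c ⟶ P := (sigmaRepIso c).inv ≫ r with hr'
    have hir' : i' ≫ r' = 𝟙 P := by
      rw [hi', hr']
      simp [hir]
    classical
    let S := { j : Fin n // sigmaFun i' r' j = j }
    let eS : Fin (Fintype.card S) ≃ S := (Fintype.equivFin S).symm
    refine ⟨Fintype.card S, fun k => Part i' (eS k).1, fun k =>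
      ⟨c (eS k).1, partToRep i' (eS k).1, repToPart i' r' (eS k).2,
        part_retract i' r' hir' (eS k).2⟩, ?_⟩
    -- a cofan with apex P
    let myCofan : Cofan (fun k : Fin (Fintype.card S) => Part i' (eS k).1) :=
      Cofan.mk P (fun k => partIncl i' (eS k).1)
    have inj_congr : ∀ (Z : Cᵒᵖ ⥤ Type u)
        (inj : ∀ k : Fin (Fintype.card S), Part i' (eS k).1 ⟶ Z)
        {k k' : Fin (Fintype.card S)} (h : k = k') (X : Cᵒᵖ) (x : P.obj X)
        (h1 : (i'.app X x).1 = (eS k).1) (h2 : (i'.app X x).1 = (eS k').1),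
        (inj k).app X ⟨x, h1⟩ = (inj k').app X ⟨x, h2⟩ := by
      intro Z inj k k' h X x h1 h2
      subst h
      rfl
    have keyfix : ∀ (X : Cᵒᵖ) (x : P.obj X), sigmaFun i' r' (i'.app X x).1 = (i'.app X x).1 :=
      sigma_fix i' r' hir'
    let kOf : ∀ (X : Cᵒᵖ) (x : P.obj X), Fin (Fintype.card S) :=
      fun X x => eS.symm ⟨(i'.app X x).1, keyfix X x⟩
    have kOf_spec : ∀ (X : Cᵒᵖ) (x : P.obj X), (i'.app X x).1 = (eS (kOf X x)).1 := by
      intro X x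
      simp [kOf, eS]
    have myIsColimit : IsColimit myCofan := by
      refine mkCofanColimit _
        (fun s =>
          { app := fun X => ↾fun (x : P.obj X) => (s.inj (kOf X x)).app X ⟨x, kOf_spec X x⟩
            naturality := by
              intro X Y f
              ext x : 3
              have h := ConcreteCategory.congr_hom (i'.naturality f) x
              simp only [types_comp_apply] at h
              have hfst : (i'.app Y (P.map f x)).1 = (i'.app X x).1 := congrArg Sigma.fst h
              have hk : kOf Y (P.map f x) = kOf X x :=
                congrArg eS.symm (Subtype.ext hfst)
              have h1 : (i'.app Y (P.map f x)).1 = (eS (kOf X x)).1 :=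
                hfst.trans (kOf_spec X x)
              have step1 : (s.inj (kOf Y (P.map f x))).app Y
                    ⟨P.map f x, kOf_spec Y (P.map f x)⟩
                  = (s.inj (kOf X x)).app Y ⟨P.map f x, h1⟩ :=
                inj_congr s.pt s.inj hk Y (P.map f x) (kOf_spec Y (P.map f x)) h1
              have hnat := ConcreteCategory.congr_hom ((s.inj (kOf X x)).naturality f)
                (⟨x, kOf_spec X x⟩ : (Part i' (eS (kOf X x)).1).obj X)
              simp only [types_comp_apply] at hnat
              exact step1.trans hnat })
        ?_ ?_
      · intro s k
        ext X x
        obtain ⟨x, hx⟩ := x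
        have hk : kOf X x = k := by
          have : (⟨(i'.app X x).1, keyfix X x⟩ : S) = eS k := Subtype.ext hx
          simp [kOf, this, eS]
        exact inj_congr s.pt s.inj hk X x (kOf_spec X x) hx
      · intro s m hm
        ext X x
        have hx : x = (myCofan.inj (kOf X x)).app X ⟨x, kOf_spec X x⟩ := rfl
        conv_lhs => rw [hx]
        exact ConcreteCategory.congr_hom (NatTrans.congr_app (hm (kOf X x)) X)
          (⟨x, kOf_spec X x⟩ : (Part i' (eS (kOf X x)).1).obj X)
    exact ⟨myIsColimit.coconePointUniqueUpToIso (colimit.isColimit _)⟩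
  · rintro ⟨n, Q, hQ, ⟨φ⟩⟩
    choose c ii rr hQ using hQ
    refine ⟨n, c, φ.hom ≫ Limits.Sigma.map ii, Limits.Sigma.map rr ≫ φ.inv, ?_⟩
    rw [Category.assoc, ← Category.assoc (Limits.Sigma.map ii), Limits.Sigma.map_comp_map]
    simp only [hQ]
    simp
end

section
/- If idempotents split in a small category C, then every retract in [C^op, Set] of a finite coproduct of representable presheaves is itself isomorphic to a finite coproduct of representable presheaves. -/
open CategoryTheory Limits Opposite

universe u

namespace Stmt13Aux

variable {C : Type u} [SmallCategory C]

/-- Packaging an index and a morphism into a map to a finite coproduct of representables. -/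
noncomputable def pack {n : ℕ} (c : Fin n → C) (a : C) :
    (Σ k : Fin n, (a ⟶ c k)) → (yoneda.obj a ⟶ ∐ fun j => yoneda.obj (c j)) :=
  fun p => yoneda.map p.2 ≫ Sigma.ι (fun j => yoneda.obj (c j)) p.1

lemma sigma_snd_eq {n : ℕ} (c : Fin n → C) {a : C} {p q : Σ m : Fin n, (a ⟶ c m)}
    (h : p = q) : p.2 ≫ eqToHom (congrArg c (congrArg Sigma.fst h)) = q.2 := by
  subst h; simp

lemma pack_bijective {n : ℕ} (c : Fin n → C) (a : C) :
    Function.Bijective (pack c a) := by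
  let G := (evaluation Cᵒᵖ (Type u)).obj (op a)
  let τ : G.obj (∐ fun j => yoneda.obj (c j)) ≅ ∐ fun j => (yoneda.obj (c j)).obj (op a) :=
    PreservesCoproduct.iso G _
  let σ := Types.coproductIso (fun j => (yoneda.obj (c j)).obj (op a))
  let E : (yoneda.obj a ⟶ ∐ fun j => yoneda.obj (c j)) ≃ Σ k : Fin n, (a ⟶ c k) :=
    yonedaEquiv.trans (τ ≪≫ σ).toEquiv
  have hι : ∀ k : Fin n, G.map (Sigma.ι (fun j => yoneda.obj (c j)) k) ≫ τ.hom =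
      Sigma.ι (fun j => (yoneda.obj (c j)).obj (op a)) k := by
    intro k
    have h : Sigma.ι (fun j => (yoneda.obj (c j)).obj (op a)) k ≫ τ.inv =
        G.map (Sigma.ι (fun j => yoneda.obj (c j)) k) :=
      ι_comp_sigmaComparison G (fun j => yoneda.obj (c j)) k
    rw [← h, Category.assoc, τ.inv_hom_id, Category.comp_id]
  have hE : ∀ p, E (pack c a p) = p := by
    rintro ⟨k, f⟩
    show (τ ≪≫ σ).hom (yonedaEquiv (yoneda.map f ≫ Sigma.ι (fun j => yoneda.obj (c j)) k)) = _
    rw [yonedaEquiv_comp, yonedaEquiv_yoneda_map]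
    have h1 : (Sigma.ι (fun j => yoneda.obj (c j)) k).app (op a) f =
        G.map (Sigma.ι (fun j => yoneda.obj (c j)) k) f := rfl
    simp only [Iso.trans_hom, types_comp_apply, h1]
    rw [← types_comp_apply (G.map _) τ.hom, hι k]
    exact ConcreteCategory.congr_hom (Types.coproductIso_ι_comp_hom (fun j => (yoneda.obj (c j)).obj (op a)) k) f
  have hpack : pack c a = ⇑E.symm := by
    funext p
    conv_lhs => rw [← E.symm_apply_apply (pack c a p), hE p]
  rw [hpack]
  exact E.symm.bijective

end Stmt13Aux

open Stmt13Aux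

/-- If idempotents split in a small category `C`, then every retract in `[Cᵒᵖ, Type]` of a
finite coproduct of representable presheaves is itself isomorphic to a finite coproduct of
representables. -/
theorem stmt13 {C : Type u} [SmallCategory C] [IsIdempotentComplete C]
    (P : Cᵒᵖ ⥤ Type u)
    (h : ∃ (n : ℕ) (c : Fin n → C) (i : P ⟶ ∐ fun j => yoneda.obj (c j))
      (r : (∐ fun j => yoneda.obj (c j)) ⟶ P), i ≫ r = 𝟙 P) :
    ∃ (n : ℕ) (c : Fin n → C), Nonempty (P ≅ ∐ fun j => yoneda.obj (c j)) := by
  obtain ⟨n, c, i, r, hir⟩ := h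
  let e : (∐ fun j => yoneda.obj (c j)) ⟶ (∐ fun j => yoneda.obj (c j)) := r ≫ i
  have he : e ≫ e = e := by
    simp only [e, Category.assoc]
    rw [reassoc_of% hir]
  -- decompose `e` on each summand
  choose p hp using fun j : Fin n =>
    (pack_bijective c (c j)).2 (Sigma.ι (fun j => yoneda.obj (c j)) j ≫ e)
  let k : Fin n → Fin n := fun j => (p j).1
  let f : ∀ j : Fin n, c j ⟶ c (k j) := fun j => (p j).2
  have hα : ∀ j : Fin n, yoneda.map (f j) ≫ Sigma.ι (fun j => yoneda.obj (c j)) (k j) =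
      Sigma.ι (fun j => yoneda.obj (c j)) j ≫ e := fun j => hp j
  have hsig : ∀ j : Fin n,
      (⟨k (k j), f j ≫ f (k j)⟩ : Σ m : Fin n, (c j ⟶ c m)) = ⟨k j, f j⟩ := by
    intro j
    apply (pack_bijective c (c j)).1
    show yoneda.map (f j ≫ f (k j)) ≫ _ = yoneda.map (f j) ≫ _
    rw [yoneda.map_comp, Category.assoc, hα (k j), reassoc_of% (hα j), he, hα j]
  have h1 : ∀ j : Fin n, k (k j) = k j := fun j => congrArg Sigma.fst (hsig j)
  have h2 : ∀ j : Fin n, (f j ≫ f (k j)) ≫ eqToHom (congrArg c (h1 j)) = f j := by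
    intro j
    have := sigma_snd_eq c (hsig j)
    simpa using this
  -- the fixed points of `k`, with their idempotents
  let J := { j : Fin n // k j = j }
  let g : ∀ j : J, c j.1 ⟶ c j.1 := fun j => f j.1 ≫ eqToHom (congrArg c j.2)
  have hcomm : ∀ (m m' : Fin n) (hm : m = m'),
      eqToHom (congrArg c hm) ≫ f m' = f m ≫ eqToHom (congrArg c (congrArg k hm)) := by
    rintro m m' rfl; simp
  have hg : ∀ j : J, g j ≫ g j = g j := by
    rintro ⟨j, hj⟩
    show (f j ≫ eqToHom (congrArg c hj)) ≫ (f j ≫ eqToHom (congrArg c hj)) =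
      f j ≫ eqToHom (congrArg c hj)
    rw [Category.assoc, ← Category.assoc (eqToHom _) (f j), hcomm (k j) j hj,
      Category.assoc, eqToHom_trans, ← Category.assoc]
    conv_rhs => rw [← h2 j, Category.assoc, Category.assoc]
    rw [Category.assoc, eqToHom_trans]
  -- split the idempotents in C
  choose d s t hst hts using fun j : J =>
    IsIdempotentComplete.idempotents_split (c j.1) (g j) (hg j)
  -- the candidate coproduct, indexed by J
  let DJ := ∐ fun j : J => yoneda.obj (d j)
  let q : ∀ (m : Fin n), k m = m → (yoneda.obj (c m) ⟶ DJ) :=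
    fun m hm => yoneda.map (t ⟨m, hm⟩) ≫ Sigma.ι (fun j : J => yoneda.obj (d j)) ⟨m, hm⟩
  have hq : ∀ (m m' : Fin n) (hmm : m = m') (hm : k m = m) (hm' : k m' = m'),
      q m hm = eqToHom (congrArg (fun x => yoneda.obj (c x)) hmm) ≫ q m' hm' := by
    rintro m m' rfl hm hm'; simp
  let u : (∐ fun j => yoneda.obj (c j)) ⟶ DJ :=
    Sigma.desc fun j => yoneda.map (f j) ≫ q (k j) (h1 j)
  let v : DJ ⟶ (∐ fun j => yoneda.obj (c j)) :=
    Sigma.desc fun j : J => yoneda.map (s j) ≫ Sigma.ι (fun j => yoneda.obj (c j)) j.1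
  have hA : u ≫ v = e := by
    apply Sigma.hom_ext
    intro j
    rw [← hα j, colimit.ι_desc_assoc]
    show (yoneda.map (f j) ≫ q (k j) (h1 j)) ≫ v = _
    simp only [q, Category.assoc]
    rw [colimit.ι_desc]
    show yoneda.map (f j) ≫ yoneda.map (t ⟨k j, h1 j⟩) ≫ yoneda.map (s ⟨k j, h1 j⟩) ≫ _ = _
    rw [← yoneda.map_comp_assoc, ← yoneda.map_comp_assoc, Category.assoc, hts ⟨k j, h1 j⟩]
    show yoneda.map (f j ≫ f (k j) ≫ eqToHom (congrArg c (h1 j))) ≫ _ = _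
    rw [← Category.assoc (f j), h2 j]
  have hB : v ≫ u = 𝟙 DJ := by
    apply Sigma.hom_ext
    rintro ⟨j, hj⟩
    rw [colimit.ι_desc_assoc, Category.comp_id]
    show yoneda.map (s ⟨j, hj⟩) ≫ Sigma.ι (fun j => yoneda.obj (c j)) j ≫ u = _
    simp only [u]
    rw [colimit.ι_desc]
    show yoneda.map (s ⟨j, hj⟩) ≫ yoneda.map (f j) ≫ q (k j) (h1 j) = _
    rw [hq (k j) j hj (h1 j) hj]
    show yoneda.map (s ⟨j, hj⟩) ≫ yoneda.map (f j) ≫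
        eqToHom (congrArg (fun x => yoneda.obj (c x)) hj) ≫
        yoneda.map (t ⟨j, hj⟩) ≫ Sigma.ι (fun j : J => yoneda.obj (d j)) ⟨j, hj⟩ = _
    have h5 : yoneda.map (f j) ≫ eqToHom (congrArg (fun x => yoneda.obj (c x)) hj) =
        yoneda.map (g ⟨j, hj⟩) := by
      show _ = yoneda.map (f j ≫ eqToHom (congrArg c hj))
      rw [yoneda.map_comp, eqToHom_map]
    rw [reassoc_of% h5, ← yoneda.map_comp_assoc, ← yoneda.map_comp_assoc]
    have h3 : (s ⟨j, hj⟩ ≫ g ⟨j, hj⟩) ≫ t ⟨j, hj⟩ = 𝟙 (d ⟨j, hj⟩) := by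
      rw [← hts ⟨j, hj⟩, Category.assoc, Category.assoc, hst ⟨j, hj⟩, Category.comp_id,
        hst ⟨j, hj⟩]
    rw [h3, yoneda.map_id, Category.id_comp]
  -- `P` is isomorphic to `DJ` since both split the idempotent `e`
  let φ : P ≅ DJ :=
    { hom := i ≫ u
      inv := v ≫ r
      hom_inv_id := by
        rw [show (i ≫ u) ≫ v ≫ r = i ≫ (u ≫ v) ≫ r by simp only [Category.assoc], hA]
        show i ≫ (r ≫ i) ≫ r = 𝟙 P
        rw [show i ≫ (r ≫ i) ≫ r = (i ≫ r) ≫ i ≫ r by simp only [Category.assoc], hir,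
          Category.id_comp]
      inv_hom_id := by
        have h4 : (v ≫ r) ≫ i ≫ u = v ≫ (u ≫ v) ≫ u := by
          rw [hA]; simp only [Category.assoc, e]
        rw [h4, show v ≫ (u ≫ v) ≫ u = (v ≫ u) ≫ v ≫ u by simp only [Category.assoc], hB,
          Category.id_comp] }
  -- reindex the coproduct by `Fin (Fintype.card J)`
  let ε := Fintype.equivFin J
  refine ⟨Fintype.card J, fun t => d (ε.symm t), ⟨φ ≪≫ ?_⟩⟩
  exact Sigma.whiskerEquiv ε fun j => eqToIso (by simp)
end

section
/- In the category Gph of directed graphs, the terminal object 1 (one vertex with a loop) is not strongly finitely presentable: the functor Hom(1, −) : Gph → Set fails to preserve the reflexive coequalizer identifying the source and target of the free-living edge E. -/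
open CategoryTheory Limits WalkingParallelPair

/-- The category of directed graphs: presheaves on the walking parallel pair. -/
abbrev Gph := WalkingParallelPairᵒᵖ ⥤ Type

/-- The free-living edge. -/
abbrev E : Gph := yoneda.obj one

/-- The free-living vertex. -/
abbrev V : Gph := yoneda.obj zero

/-- The map `E + V ⟶ E` which is the identity on `E` and picks out the source on `V`. -/
noncomputable def f : E ⨿ V ⟶ E :=
  coprod.desc (𝟙 E) (yoneda.map WalkingParallelPairHom.left)

/-- The map `E + V ⟶ E` which is the identity on `E` and picks out the target on `V`. -/
noncomputable def g : E ⨿ V ⟶ E :=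
  coprod.desc (𝟙 E) (yoneda.map WalkingParallelPairHom.right)

/-- Explicit terminal graph: one vertex, one loop. -/
def T : Gph := (Functor.const _).obj PUnit

def isTerminalT : IsTerminal T :=
  IsTerminal.ofUniqueHom (fun _ => { app := fun _ => TypeCat.ofHom fun _ => PUnit.unit })
    (fun _ m => by ext X x; rfl)

def homToOne : ∀ c : WalkingParallelPair, c ⟶ one
  | zero => WalkingParallelPairHom.left
  | one => 𝟙 one

lemma no_hom_T_E (h : T ⟶ E) : False := by
  have hl : h.app (Opposite.op zero) PUnit.unit =
      WalkingParallelPairHom.left ≫ h.app (Opposite.op one) PUnit.unit :=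
    ConcreteCategory.congr_hom (h.naturality (Quiver.Hom.op WalkingParallelPairHom.left)) PUnit.unit
  have hr : h.app (Opposite.op zero) PUnit.unit =
      WalkingParallelPairHom.right ≫ h.app (Opposite.op one) PUnit.unit :=
    ConcreteCategory.congr_hom (h.naturality (Quiver.Hom.op WalkingParallelPairHom.right)) PUnit.unit
  have key := hl.symm.trans hr
  cases h' : h.app (Opposite.op one) PUnit.unit
  rw [h'] at key
  cases key

lemma cofork_key (s : Cofork f g) :
    s.π.app (Opposite.op zero) WalkingParallelPairHom.left =
      s.π.app (Opposite.op zero) WalkingParallelPairHom.right := by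
  have h : yoneda.map WalkingParallelPairHom.left ≫ s.π =
      yoneda.map WalkingParallelPairHom.right ≫ s.π := by
    have := congrArg (fun t => (coprod.inr : V ⟶ E ⨿ V) ≫ t) s.condition
    simpa [f, g, coprod.inr_desc] using this
  have := congrFun (congrArg (fun t => t.app (Opposite.op zero)) h) (𝟙 zero)
  simpa [yoneda] using this

noncomputable def myCofork : Cofork f g :=
  Cofork.ofπ (isTerminalT.from E) (isTerminalT.hom_ext _ _)

lemma pi_app_eq (s : Cofork f g) (X : WalkingParallelPairᵒᵖ) (h : X.unop ⟶ one) :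
    s.π.app X h = s.π.app X (homToOne X.unop) := by
  obtain ⟨c⟩ := X
  change WalkingParallelPairHom c one at h
  cases h
  · rfl
  · exact (cofork_key s).symm
  · rfl

noncomputable def myIsColimit : IsColimit myCofork :=
  Cofork.IsColimit.mk _
    (fun s =>
      { app := fun X => TypeCat.ofHom fun _ => s.π.app X (homToOne X.unop)
        naturality := by
          intro X Y φ
          ext x
          have hnat : s.pt.map φ (s.π.app X (homToOne X.unop)) =
              s.π.app Y (E.map φ (homToOne X.unop)) :=
            (ConcreteCategory.congr_hom (s.π.naturality φ) (homToOne X.unop)).symm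
          show s.π.app Y (homToOne Y.unop) = s.pt.map φ (s.π.app X (homToOne X.unop))
          rw [hnat]
          exact (pi_app_eq s Y _).symm })
    (fun s => by
      ext X h
      exact (pi_app_eq s X h).symm)
    (fun s m w => by
      ext X x
      obtain ⟨⟩ := x
      have h1 : m.app X (myCofork.π.app X (homToOne X.unop)) =
          s.π.app X (homToOne X.unop) :=
        congrFun (congrArg (fun t => t.app X) w) (homToOne X.unop)
      have h2 : myCofork.π.app X (homToOne X.unop) = PUnit.unit :=
        Subsingleton.elim (α := PUnit) _ _
      rw [h2] at h1
      exact h1)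

noncomputable def colimIso : colimit (parallelPair f g) ≅ T :=
  colimit.isoColimitCocone ⟨myCofork, myIsColimit⟩

lemma no_hom_top_E (h : (⊤_ Gph) ⟶ E) : False :=
  no_hom_T_E ((terminalIsoIsTerminal isTerminalT).inv ≫ h)

/-- The pair `f, g : E + V ⟶ E` is reflexive, its coequalizer is the terminal graph `1`
(one vertex with a loop), and `Hom(1, −) : Gph ⥤ Type` fails to preserve this reflexive
coequalizer; hence the terminal graph is not strongly finitely presentable. -/
theorem stmt15 :
    IsReflexivePair f g ∧
    Nonempty (colimit (parallelPair f g) ≅ ⊤_ Gph) ∧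
    ¬ Nonempty (PreservesColimit (parallelPair f g)
        (coyoneda.obj (Opposite.op (⊤_ Gph)))) := by
  refine ⟨IsReflexivePair.mk' coprod.inl (by simp [f, coprod.inl_desc]) (by simp [g, coprod.inl_desc]),
    ⟨colimIso ≪≫ (terminalIsoIsTerminal isTerminalT).symm⟩, ?_⟩
  rintro ⟨P⟩
  have hc := isColimitOfPreserves (coyoneda.obj (Opposite.op (⊤_ Gph)))
    (colimit.isColimit (parallelPair f g))
  have x : (⊤_ Gph) ⟶ colimit (parallelPair f g) :=
    (colimIso ≪≫ (terminalIsoIsTerminal isTerminalT).symm).inv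
  obtain ⟨j, y, -⟩ := Types.jointly_surjective _ hc x
  cases j
  · exact no_hom_top_E (y ≫ f)
  · exact no_hom_top_E y
end

section
/- Set is the free completion of the category of finite sets under sifted colimits as well as under filtered colimits; consequently, an endofunctor of Set preserves filtered colimits if and only if it preserves sifted colimits. -/
open CategoryTheory Limits

universe v₁ u₁ u

namespace Stmt19Aux








theorem isSifted_of_isFiltered (D : Type u₁) [Category.{v₁} D] [IsFiltered D] : IsSifted D := by
  haveI : (Functor.diag D).Final := by
    apply Functor.final_of_exists_of_isFiltered
    · rintro ⟨d₁, d₂⟩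
      exact ⟨IsFiltered.max d₁ d₂,
        ⟨⟨IsFiltered.leftToMax d₁ d₂, IsFiltered.rightToMax d₁ d₂⟩⟩⟩
    · rintro ⟨d₁, d₂⟩ c ⟨s₁, s₂⟩ ⟨s₁', s₂'⟩
      refine ⟨_, IsFiltered.coeqHom s₁ s₁' ≫
        IsFiltered.coeqHom (s₂ ≫ IsFiltered.coeqHom s₁ s₁') (s₂' ≫ IsFiltered.coeqHom s₁ s₁'), ?_⟩
      have h₁ : s₁ ≫ IsFiltered.coeqHom s₁ s₁' = s₁' ≫ IsFiltered.coeqHom s₁ s₁' :=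
        IsFiltered.coeq_condition _ _
      have h₂ := IsFiltered.coeq_condition (s₂ ≫ IsFiltered.coeqHom s₁ s₁')
        (s₂' ≫ IsFiltered.coeqHom s₁ s₁')
      apply Prod.ext
      · simp [Functor.diag, reassoc_of% h₁]
      · simpa using h₂
  haveI : Nonempty D := IsFiltered.nonempty
  exact ⟨⟩



variable (X : Type u)

/-- The diagram of finite subsets of `X`. -/
def finsub : Finset X ⥤ Type u where
  obj S := {x : X // x ∈ S}
  map {S T} f := TypeCat.ofHom fun x => ⟨x.1, leOfHom f x.2⟩

/-- The canonical cocone on `finsub X` with point `X`. -/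
def finsubCocone : Cocone (finsub X) where
  pt := X
  ι := { app := fun _ => TypeCat.ofHom fun x => x.1, naturality := fun _ _ _ => rfl }

/-- The canonical cocone is colimiting. -/
noncomputable def finsubIsColimit : IsColimit (finsubCocone X) := by
  classical
  exact Types.FilteredColimit.isColimitOf _ _
    (fun x => ⟨{x}, ⟨x, Finset.mem_singleton_self x⟩, rfl⟩)
    (fun S T xs xt h =>
      ⟨S ⊔ T, homOfLE le_sup_left, homOfLE le_sup_right, Subtype.ext h⟩)

theorem finsub_isFiltered : IsFiltered (Finset X) := by
  classical
  infer_instance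


section Master

variable {D : Type u} [Category.{u} D] (G : D ⥤ Type u) (F : Type u ⥤ Type u)
  {k : Type u} (α : F.obj k)

/-- Auxiliary point of the colimit of `G ⋙ F`. -/
noncomputable def cc (d : D) (ρ : k → G.obj d) : colimit (G ⋙ F) :=
  colimit.ι (G ⋙ F) d (F.map (TypeCat.ofHom ρ) α)

theorem cc_map {d e : D} (u : d ⟶ e) (ρ : k → G.obj d) :
    cc G F α e (G.map u ∘ ρ) = cc G F α d ρ := by
  have h : F.map (TypeCat.ofHom (G.map u ∘ ρ)) α = (G ⋙ F).map u (F.map (TypeCat.ofHom ρ) α) := by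
    have h' : TypeCat.ofHom (G.map u ∘ ρ : k → G.obj e) = TypeCat.ofHom ρ ≫ G.map u := rfl
    rw [h', F.map_comp]
    rfl
  rw [cc, cc, h, Types.Colimit.w_apply]

variable [IsSifted D]

theorem exists_cospan (d₁ d₂ : D) : ∃ (e : D) (_ : d₁ ⟶ e) (_ : d₂ ⟶ e), True := by
  have h : IsConnected (StructuredArrow ((d₁, d₂) : D × D) (Functor.diag D)) :=
    Functor.Final.out _
  obtain ⟨Z⟩ := h.is_nonempty
  exact ⟨Z.right, Z.hom.1, Z.hom.2, trivial⟩

theorem cc_vconst [DecidableEq k] {d c : D} (ρ : k → G.obj d) (x0 : k) (z : G.obj c)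
    (e : D) (j : d ⟶ e) (w : c ⟶ e) (e' : D) (j' : d ⟶ e') (w' : c ⟶ e') :
    cc G F α e (Function.update (G.map j ∘ ρ) x0 (G.map w z)) =
      cc G F α e' (Function.update (G.map j' ∘ ρ) x0 (G.map w' z)) := by
  haveI hcon : IsConnected (StructuredArrow ((d, c) : D × D) (Functor.diag D)) :=
    Functor.Final.out _
  have key := constant_of_preserves_morphisms
    (J := StructuredArrow ((d, c) : D × D) (Functor.diag D))
    (fun W => cc G F α W.right (Function.update (G.map W.hom.1 ∘ ρ) x0 (G.map W.hom.2 z)))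
    (fun W₁ W₂ m => by
      have hw := StructuredArrow.w m
      have h1 : W₁.hom.1 ≫ m.right = W₂.hom.1 := congrArg Prod.fst hw
      have h2 : W₁.hom.2 ≫ m.right = W₂.hom.2 := congrArg Prod.snd hw
      dsimp only
      rw [← cc_map G F α m.right (Function.update (G.map W₁.hom.1 ∘ ρ) x0 (G.map W₁.hom.2 z))]
      congr 1
      funext x
      by_cases hx : x = x0
      · subst hx
        simp only [Function.comp_apply, Function.update_self]
        rw [← h2, G.map_comp]
        rfl
      · simp only [Function.comp_apply, Function.update_of_ne hx]
        rw [← h1, G.map_comp]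
        rfl)
  exact key (StructuredArrow.mk ((j, w) : ((d, c) : D × D) ⟶ (Functor.diag D).obj e))
    (StructuredArrow.mk ((j', w') : ((d, c) : D × D) ⟶ (Functor.diag D).obj e'))

theorem cc_update [DecidableEq k] {d : D} (ρ : k → G.obj d) (x0 : k) (y : G.obj d)
    (h : colimit.ι G d (ρ x0) = colimit.ι G d y) :
    cc G F α d ρ = cc G F α d (Function.update ρ x0 y) := by
  have key : ∀ (p q : Σ c, G.obj c), Relation.EqvGen (G.ColimitTypeRel) p q →
      ∀ (e : D) (j : d ⟶ e) (w : p.1 ⟶ e) (e' : D) (j' : d ⟶ e') (w' : q.1 ⟶ e'),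
        cc G F α e (Function.update (G.map j ∘ ρ) x0 (G.map w p.2)) =
          cc G F α e' (Function.update (G.map j' ∘ ρ) x0 (G.map w' q.2)) := by
    intro p q hpq
    induction hpq with
    | rel p q hrel =>
      intro e j w e' j' w'
      obtain ⟨f, hf⟩ := hrel
      have h1 := cc_vconst G F α ρ x0 p.2 e j w e' j' (f ≫ w')
      rw [h1]
      congr 2
      rw [G.map_comp, hf]
      rfl
    | refl p =>
      intro e j w e' j' w'
      exact cc_vconst G F α ρ x0 p.2 e j w e' j' w'
    | symm p q _ ih =>
      intro e j w e' j' w'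
      exact (ih e' j' w' e j w).symm
    | trans p q r _ _ ih1 ih2 =>
      intro e j w e' j' w'
      obtain ⟨e'', j'', w'', -⟩ := exists_cospan (d₁ := d) (d₂ := q.1)
      exact (ih1 e j w e'' j'' w'').trans (ih2 e'' j'' w'' e' j' w')
  have hchain := Types.colimit_eq h
  have main := key ⟨d, ρ x0⟩ ⟨d, y⟩ hchain d (𝟙 d) (𝟙 d) d (𝟙 d) (𝟙 d)
  have e1 : Function.update (G.map (𝟙 d) ∘ ρ) x0 (G.map (𝟙 d) (ρ x0)) = ρ := by
    funext x
    by_cases hx : x = x0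
    · subst hx; rw [Function.update_self]; simp
    · rw [Function.update_of_ne hx]; simp
  have e2 : Function.update (G.map (𝟙 d) ∘ ρ) x0 (G.map (𝟙 d) y)
      = Function.update ρ x0 y := by
    funext x
    by_cases hx : x = x0
    · subst hx; rw [Function.update_self, Function.update_self]; simp
    · rw [Function.update_of_ne hx, Function.update_of_ne hx]; simp
  rwa [e1, e2] at main

theorem cc_of_pointwise_aux [DecidableEq k] (l : List k) {d : D} (ρ ρ' : k → G.obj d)
    (h : ∀ x, colimit.ι G d (ρ x) = colimit.ι G d (ρ' x))
    (h2 : ∀ x, x ∉ l → ρ x = ρ' x) : cc G F α d ρ = cc G F α d ρ' := by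
  induction l generalizing ρ with
  | nil =>
    have : ρ = ρ' := funext fun x => h2 x List.not_mem_nil
    rw [this]
  | cons a l ih =>
    rw [cc_update G F α ρ a (ρ' a) (h a)]
    refine ih (Function.update ρ a (ρ' a)) (fun x => ?_) (fun x hx => ?_)
    · by_cases hx : x = a
      · subst hx; simp
      · simpa [Function.update_of_ne hx] using h x
    · by_cases hx' : x = a
      · subst hx'; simp
      · rw [Function.update_of_ne hx']
        exact h2 x (by simpa [hx'] using hx)

theorem cc_of_pointwise [Fintype k] {d d' : D} (ρ : k → G.obj d) (ρ' : k → G.obj d')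
    (h : ∀ x, colimit.ι G d (ρ x) = colimit.ι G d' (ρ' x)) :
    cc G F α d ρ = cc G F α d' ρ' := by
  classical
  obtain ⟨e, u, v, -⟩ := exists_cospan (d₁ := d) (d₂ := d') (D := D)
  rw [← cc_map G F α u ρ, ← cc_map G F α v ρ']
  refine cc_of_pointwise_aux G F α Finset.univ.toList _ _ (fun x => ?_) (fun x hx => ?_)
  · simp only [Function.comp_apply]
    rw [Types.Colimit.w_apply, Types.Colimit.w_apply]
    exact h x
  · exact absurd (by simp) hx

end Master


section Finitary

variable (X : Type u) (F : Type u ⥤ Type u)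

theorem fin_surj (pres : PreservesColimitsOfShape (Finset X) F) (x : F.obj X) :
    ∃ (S : Finset X) (z : F.obj {y : X // y ∈ S}),
      F.map (TypeCat.ofHom (fun y => y.1 : {y : X // y ∈ S} → X)) z = x := by
  have hc : IsColimit (F.mapCocone (finsubCocone X)) :=
    isColimitOfPreserves F (finsubIsColimit X)
  obtain ⟨S, z, hz⟩ := Types.jointly_surjective _ hc x
  exact ⟨S, z, hz⟩

theorem fin_eq (pres : PreservesColimitsOfShape (Finset X) F) {S : Finset X}
    (a b : F.obj {y : X // y ∈ S})
    (h : F.map (TypeCat.ofHom (fun y => y.1 : {y : X // y ∈ S} → X)) a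
        = F.map (TypeCat.ofHom (fun y => y.1 : {y : X // y ∈ S} → X)) b) :
    ∃ (T : Finset X) (hST : S ⟶ T),
      F.map ((finsub X).map hST) a = F.map ((finsub X).map hST) b := by
  classical
  have hc : IsColimit (F.mapCocone (finsubCocone X)) :=
    isColimitOfPreserves F (finsubIsColimit X)
  have h' : (F.mapCocone (finsubCocone X)).ι.app S a
      = (F.mapCocone (finsubCocone X)).ι.app S b := h
  obtain ⟨T, f, g, hfg⟩ :=
    (Types.FilteredColimit.isColimit_eq_iff (finsub X ⋙ F) hc).mp h'
  refine ⟨T, f, ?_⟩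
  have hgf : g = f := Subsingleton.elim _ _
  rw [← hgf]
  exact hfg

end Finitary

section Lift

variable {D : Type u} [Category.{u} D] [IsSifted D] (G : D ⥤ Type u)

theorem exists_lift (T : Finset (colimit G)) :
    ∃ (e : D) (t : {y // y ∈ T} → G.obj e),
      ∀ x : {y // y ∈ T}, colimit.ι G e (t x) = x.1 := by
  classical
  induction T using Finset.induction_on with
  | empty =>
    exact ⟨Classical.arbitrary D, fun x => absurd x.2 (Finset.notMem_empty _),
      fun x => absurd x.2 (Finset.notMem_empty _)⟩
  | @insert a T ha ih =>
    obtain ⟨e, t, ht⟩ := ih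
    obtain ⟨da, y, hy⟩ := Types.jointly_surjective' (x := a)
    obtain ⟨e', uu, vv, -⟩ := exists_cospan (D := D) e da
    refine ⟨e', fun x => if hx : x.1 ∈ T then G.map uu (t ⟨x.1, hx⟩) else G.map vv y,
      fun x => ?_⟩
    dsimp only
    by_cases hx : x.1 ∈ T
    · rw [dif_pos hx, Types.Colimit.w_apply]
      exact ht ⟨x.1, hx⟩
    · rw [dif_neg hx, Types.Colimit.w_apply, hy]
      rcases Finset.mem_insert.mp x.2 with h | h
      · exact h.symm
      · exact absurd h hx

end Lift

section MainProof

variable (F : Type u ⥤ Type u)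

theorem combine {Y : Type u} (hpres : PreservesColimitsOfShape (Finset Y) F)
    (a b : F.obj Y) :
    ∃ (S : Finset Y) (α β : F.obj {y : Y // y ∈ S}),
      F.map (TypeCat.ofHom (fun y => y.1 : {y : Y // y ∈ S} → Y)) α = a ∧
      F.map (TypeCat.ofHom (fun y => y.1 : {y : Y // y ∈ S} → Y)) β = b := by
  classical
  obtain ⟨S₁, α₁, hα₁⟩ := fin_surj Y F hpres a
  obtain ⟨S₂, β₁, hβ₁⟩ := fin_surj Y F hpres b
  refine ⟨S₁ ∪ S₂,
    F.map (TypeCat.ofHom (fun y => ⟨y.1, Finset.mem_union_left _ y.2⟩ :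
      {y : Y // y ∈ S₁} → {y : Y // y ∈ S₁ ∪ S₂})) α₁,
    F.map (TypeCat.ofHom (fun y => ⟨y.1, Finset.mem_union_right _ y.2⟩ :
      {y : Y // y ∈ S₂} → {y : Y // y ∈ S₁ ∪ S₂})) β₁, ?_, ?_⟩
  · rw [← FunctorToTypes.map_comp_apply]
    exact hα₁
  · rw [← FunctorToTypes.map_comp_apply]
    exact hβ₁

theorem push {Y Z : Type u} [Fintype Y]
    (hpres : PreservesColimitsOfShape (Finset Z) F)
    (q : Y → Z) (α β : F.obj Y) (h : F.map (TypeCat.ofHom q) α = F.map (TypeCat.ofHom q) β) :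
    ∃ (T : Finset Z) (g : Y → {z : Z // z ∈ T}),
      (∀ y, (g y).1 = q y) ∧ F.map (TypeCat.ofHom g) α = F.map (TypeCat.ofHom g) β := by
  classical
  set T₀ : Finset Z := Finset.image q Finset.univ with hT₀
  have hq' : ∀ (γ : F.obj Y), F.map (TypeCat.ofHom q) γ =
      F.map (TypeCat.ofHom (fun z => z.1 : {z : Z // z ∈ T₀} → Z))
        (F.map (TypeCat.ofHom (fun y => (⟨q y, Finset.mem_image_of_mem q (Finset.mem_univ y)⟩ :
          {z : Z // z ∈ T₀}))) γ) := by
    intro γ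
    rw [← FunctorToTypes.map_comp_apply]
    rfl
  rw [hq', hq'] at h
  obtain ⟨T, hT, hTeq⟩ := fin_eq Z F hpres _ _ h
  refine ⟨T, (fun y => (finsub Z).map hT
    (⟨q y, Finset.mem_image_of_mem q (Finset.mem_univ y)⟩ : {z : Z // z ∈ T₀}) : Y → {z : Z // z ∈ T}),
    fun y => rfl, ?_⟩
  have e1 : ∀ (γ : F.obj Y), F.map (TypeCat.ofHom (fun y => (finsub Z).map hT
      (⟨q y, Finset.mem_image_of_mem q (Finset.mem_univ y)⟩ : {z : Z // z ∈ T₀}) : Y → {z : Z // z ∈ T})) γ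
      = F.map ((finsub Z).map hT)
        (F.map (TypeCat.ofHom (fun y => (⟨q y, Finset.mem_image_of_mem q (Finset.mem_univ y)⟩ :
          {z : Z // z ∈ T₀}))) γ) := by
    intro γ
    exact (FunctorToTypes.map_comp_apply F (TypeCat.ofHom (fun y => (⟨q y, Finset.mem_image_of_mem q (Finset.mem_univ y)⟩ :
          {z : Z // z ∈ T₀}))) ((finsub Z).map hT) γ)
  exact (e1 α).trans (hTeq.trans (e1 β).symm)

variable {D : Type u} [Category.{u} D] [IsSifted D] (G : D ⥤ Type u)

theorem post_bijective (hpres : ∀ X : Type u, PreservesColimitsOfShape (Finset X) F) :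
    Function.Bijective (colimit.post G F) := by
  classical
  have hpost : ∀ (d : D) (a : (G ⋙ F).obj d),
      colimit.post G F (colimit.ι (G ⋙ F) d a) = F.map (colimit.ι G d) a :=
    fun d a => ConcreteCategory.congr_hom (colimit.ι_post G F d) a
  constructor
  · intro p q hpq
    obtain ⟨d₁, a₁, rfl⟩ := Types.jointly_surjective' (x := p)
    obtain ⟨d₂, a₂, rfl⟩ := Types.jointly_surjective' (x := q)
    rw [hpost, hpost] at hpq
    obtain ⟨e, u₁, u₂, -⟩ := exists_cospan (D := D) d₁ d₂
    have hia : colimit.ι (G ⋙ F) d₁ a₁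
        = colimit.ι (G ⋙ F) e (F.map (G.map u₁) a₁) :=
      (Types.Colimit.w_apply (F := G ⋙ F) u₁).symm
    have hib : colimit.ι (G ⋙ F) d₂ a₂
        = colimit.ι (G ⋙ F) e (F.map (G.map u₂) a₂) :=
      (Types.Colimit.w_apply (F := G ⋙ F) u₂).symm
    have hFe : F.map (colimit.ι G e) (F.map (G.map u₁) a₁)
        = F.map (colimit.ι G e) (F.map (G.map u₂) a₂) := by
      rw [← FunctorToTypes.map_comp_apply, ← FunctorToTypes.map_comp_apply,
        colimit.w G u₁, colimit.w G u₂]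
      exact hpq
    obtain ⟨S, α, β, hα, hβ⟩ := combine F (hpres _) (F.map (G.map u₁) a₁) (F.map (G.map u₂) a₂)
    have hqeq : F.map (TypeCat.ofHom (fun y => colimit.ι G e y.1 : {y // y ∈ S} → colimit G)) α
        = F.map (TypeCat.ofHom (fun y => colimit.ι G e y.1 : {y // y ∈ S} → colimit G)) β := by
      have e1 : ∀ (γ : F.obj {y // y ∈ S}),
          F.map (TypeCat.ofHom (fun y => colimit.ι G e y.1 : {y // y ∈ S} → colimit G)) γ
          = F.map (colimit.ι G e) (F.map (TypeCat.ofHom (fun y => y.1 : {y // y ∈ S} → G.obj e)) γ) := by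
        intro γ
        rw [← FunctorToTypes.map_comp_apply]
        rfl
      rw [e1, e1, hα, hβ]
      exact hFe
    obtain ⟨T, g, hg1, hgαβ⟩ := push F (hpres _)
      (fun y => colimit.ι G e y.1 : {y // y ∈ S} → colimit G) α β hqeq
    obtain ⟨e', t, ht⟩ := exists_lift G T
    have hpt : ∀ x : {y // y ∈ S},
        colimit.ι G e ((fun y => y.1 : {y // y ∈ S} → G.obj e) x)
          = colimit.ι G e' ((t ∘ g) x) := by
      intro x
      rw [Function.comp_apply, ht (g x), hg1 x]
    have main_a : colimit.ι (G ⋙ F) e (F.map (TypeCat.ofHom (fun y => y.1 : {y // y ∈ S} → G.obj e)) α)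
        = colimit.ι (G ⋙ F) e' (F.map (TypeCat.ofHom (t ∘ g)) α) :=
      cc_of_pointwise G F α _ (t ∘ g) hpt
    have main_b : colimit.ι (G ⋙ F) e (F.map (TypeCat.ofHom (fun y => y.1 : {y // y ∈ S} → G.obj e)) β)
        = colimit.ι (G ⋙ F) e' (F.map (TypeCat.ofHom (t ∘ g)) β) :=
      cc_of_pointwise G F β _ (t ∘ g) hpt
    have htg : F.map (TypeCat.ofHom (t ∘ g)) α = F.map (TypeCat.ofHom (t ∘ g)) β := by
      have e1 : ∀ (γ : F.obj {y // y ∈ S}), F.map (TypeCat.ofHom (t ∘ g)) γ = F.map (TypeCat.ofHom t) (F.map (TypeCat.ofHom g) γ) :=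
        fun γ => FunctorToTypes.map_comp_apply F (TypeCat.ofHom g) (TypeCat.ofHom t) γ
      rw [e1, e1, hgαβ]
    rw [hia, hib, ← hα, ← hβ, main_a, main_b, htg]
  · intro x
    obtain ⟨S, z, hz⟩ := fin_surj (colimit G) F (hpres _) x
    obtain ⟨e, t, ht⟩ := exists_lift G S
    refine ⟨colimit.ι (G ⋙ F) e (F.map (TypeCat.ofHom t) z), ?_⟩
    rw [hpost, ← FunctorToTypes.map_comp_apply]
    have h1 : (TypeCat.ofHom t ≫ colimit.ι G e) = TypeCat.ofHom (fun y => y.1 : {y // y ∈ S} → colimit G) := by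
      ext y; exact ht y
    rw [h1]
    exact hz

end MainProof


theorem finsub_finite (X : Type u) (d : Finset X) : Finite ((finsub X).obj d) :=
  inferInstanceAs (Finite {x : X // x ∈ d})

end Stmt19Aux

/-- `Set` is the free completion of the finite sets under filtered colimits as well as
under sifted colimits (in particular every set is a filtered colimit, and also a sifted
colimit, of finite sets); consequently an endofunctor of `Set` preserves filtered colimits
if and only if it preserves sifted colimits. -/
theorem stmt19 :
    (∀ X : Type u, ∃ D : Cat.{u, u}, IsFiltered D ∧ ∃ G : D ⥤ Type u,
      (∀ d : D, Finite (G.obj d)) ∧ Nonempty (colimit G ≅ X)) ∧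
    (∀ X : Type u, ∃ D : Cat.{u, u}, IsSifted D ∧ ∃ G : D ⥤ Type u,
      (∀ d : D, Finite (G.obj d)) ∧ Nonempty (colimit G ≅ X)) ∧
    ∀ F : Type u ⥤ Type u,
      (∀ D : Cat.{u, u}, IsFiltered D → Nonempty (PreservesColimitsOfShape D F)) ↔
        (∀ D : Cat.{u, u}, IsSifted D → Nonempty (PreservesColimitsOfShape D F)) := by
  have part1 : ∀ X : Type u, ∃ D : Cat.{u, u}, IsFiltered D ∧ ∃ G : D ⥤ Type u,
      (∀ d : D, Finite (G.obj d)) ∧ Nonempty (colimit G ≅ X) := by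
    intro X
    refine ⟨Cat.of (Finset X), Stmt19Aux.finsub_isFiltered X, Stmt19Aux.finsub X,
      fun d => ?_, ⟨?_⟩⟩
    · exact Stmt19Aux.finsub_finite X d
    · exact (colimit.isColimit _).coconePointUniqueUpToIso (Stmt19Aux.finsubIsColimit X)
  refine ⟨part1, ?_, ?_⟩
  · intro X
    obtain ⟨D, hD, G, h1, h2⟩ := part1 X
    haveI : IsFiltered D := hD
    exact ⟨D, Stmt19Aux.isSifted_of_isFiltered D, G, h1, h2⟩
  · intro F
    constructor
    · intro hFil D hD
      haveI : IsSifted D := hD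
      have hpres : ∀ X : Type u, PreservesColimitsOfShape (Finset X) F := fun X =>
        (hFil (Cat.of (Finset X)) (Stmt19Aux.finsub_isFiltered X)).some
      refine ⟨⟨fun {K} => ?_⟩⟩
      haveI : IsIso (colimit.post K F) :=
        (isIso_iff_bijective _).mpr (Stmt19Aux.post_bijective F K hpres)
      exact preservesColimit_of_isIso_post F K
    · intro hSift D hD
      haveI : IsFiltered D := hD
      exact hSift D (Stmt19Aux.isSifted_of_isFiltered D)
end
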